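/- arXiv:1806.03436 — 6 statements merged into one kernel-verified Lean document; each statement's English description precedes it below -/
import Mathlib

section
/- Continuity lemma for cut functionals: let Wₙ, W ∈ W₀ with ‖Wₙ − W‖_□ → 0, let f : {-1,1}² → ℝ, and let uₙ : [0,1] → {-1,1} be measurable with indicator θⁿ of {uₙ = 1} converging weakly-* in L^∞([0,1]) to θ : [0,1] → [0,1]. Then ∫_{[0,1]²} Wₙ(x,y) f(uₙ(x), uₙ(y)) dx dy converges to Σ_{h,k ∈ {-1,1}} f(h,k) ∫_{[0,1]²} W(x,y) θ_h(x) θ_k(y) dx dy, where θ₁ = θ and θ₋₁ = 1 − θ. -/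
open MeasureTheory Set Filter

/-- The unit interval. -/
def I01 : Set ℝ := Set.Icc 0 1

/-- The cut norm of `U`: supremum over measurable subsets `S, T ⊆ [0,1]`
of `|∫_{S×T} U|`. -/
noncomputable def cutNorm (U : ℝ → ℝ → ℝ) : ℝ :=
  ⨆ p : {p : Set ℝ × Set ℝ //
      MeasurableSet p.1 ∧ MeasurableSet p.2 ∧ p.1 ⊆ I01 ∧ p.2 ⊆ I01},
    |∫ x in p.1.1, ∫ y in p.1.2, U x y|

namespace Stmt7

/-- indicator with value 1 -/
noncomputable def chi (s : Set ℝ) : ℝ → ℝ := s.indicator fun _ => 1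

lemma chi_mem (s : Set ℝ) (x : ℝ) : chi s x ∈ Set.Icc (0:ℝ) 1 := by
  by_cases h : x ∈ s <;> simp [chi, indicator_of_mem, indicator_of_notMem, h]

lemma chi_meas {s : Set ℝ} (hs : MeasurableSet s) : Measurable (chi s) :=
  measurable_const.indicator hs

lemma measI01 : MeasurableSet I01 := measurableSet_Icc

lemma volI01 : volume I01 = 1 := by simp [I01]

instance : IsFiniteMeasure (volume.restrict I01) := by
  constructor; rw [Measure.restrict_apply_univ]; simp [I01]

lemma abs_sub_le_one {p q : ℝ} (hp : p ∈ Set.Icc (0:ℝ) 1) (hq : q ∈ Set.Icc (0:ℝ) 1) :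
    |p - q| ≤ 1 := by
  rw [abs_sub_le_iff]; constructor <;> [skip; skip] <;>
    · obtain ⟨h1, h2⟩ := hp; obtain ⟨h3, h4⟩ := hq; linarith

lemma abs_mul_le_one {p q : ℝ} (hp : |p| ≤ 1) (hq : |q| ≤ 1) : |p * q| ≤ 1 := by
  rw [abs_mul]; nlinarith [abs_nonneg p, abs_nonneg q]

lemma intOn {g : ℝ → ℝ} (hg : AEStronglyMeasurable g (volume.restrict I01)) {C : ℝ}
    (hb : ∀ x, ‖g x‖ ≤ C) : IntegrableOn g I01 :=
  Integrable.mono' (integrable_const C) hg (ae_of_all _ hb)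

lemma measParam (s : Set ℝ) {F : ℝ → ℝ → ℝ} (hF : Measurable fun p : ℝ × ℝ => F p.1 p.2) :
    StronglyMeasurable fun x => ∫ y in s, F x y :=
  MeasureTheory.StronglyMeasurable.integral_prod_right hF.stronglyMeasurable

lemma innerBdd {s : Set ℝ} (hs : s ⊆ I01) {F : ℝ → ℝ} {C : ℝ} (hC : 0 ≤ C)
    (hb : ∀ y, ‖F y‖ ≤ C) (hm : AEStronglyMeasurable F (volume.restrict s)) :
    ‖∫ y in s, F y‖ ≤ C := by
  have hvol : volume s ≤ 1 := by rw [← volI01]; exact measure_mono hs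
  have h1 : volume s < ⊤ := lt_of_le_of_lt hvol (by norm_num)
  have h := norm_setIntegral_le_of_norm_le_const h1 (fun y _ => hb y)
  rw [measureReal_def] at h
  have h2 : (volume s).toReal ≤ 1 := by
    have := ENNReal.toReal_mono (by norm_num : (1:ENNReal) ≠ ⊤) hvol
    simpa using this
  have : C * (volume s).toReal ≤ C := by nlinarith
  linarith

lemma split4 {F1 F2 F3 F4 : ℝ → ℝ} (c1 c2 c3 c4 : ℝ)
    (h1 : IntegrableOn F1 I01) (h2 : IntegrableOn F2 I01)
    (h3 : IntegrableOn F3 I01) (h4 : IntegrableOn F4 I01) :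
    ∫ x in I01, (c1 * F1 x + c2 * F2 x + c3 * F3 x + c4 * F4 x)
      = c1 * (∫ x in I01, F1 x) + c2 * (∫ x in I01, F2 x)
        + c3 * (∫ x in I01, F3 x) + c4 * (∫ x in I01, F4 x) := by
  have hA2 : IntegrableOn (fun x => c1 * F1 x + c2 * F2 x) I01 :=
    (h1.const_mul c1).add (h2.const_mul c2)
  have hA3 : IntegrableOn (fun x => c1 * F1 x + c2 * F2 x + c3 * F3 x) I01 :=
    hA2.add (h3.const_mul c3)
  have e1 : ∫ x in I01, (c1 * F1 x + c2 * F2 x + c3 * F3 x + c4 * F4 x)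
      = (∫ x in I01, (c1 * F1 x + c2 * F2 x + c3 * F3 x)) + ∫ x in I01, c4 * F4 x :=
    integral_add hA3 (h4.const_mul c4)
  have e2 : ∫ x in I01, (c1 * F1 x + c2 * F2 x + c3 * F3 x)
      = (∫ x in I01, (c1 * F1 x + c2 * F2 x)) + ∫ x in I01, c3 * F3 x :=
    integral_add hA2 (h3.const_mul c3)
  have e3 : ∫ x in I01, (c1 * F1 x + c2 * F2 x)
      = (∫ x in I01, c1 * F1 x) + ∫ x in I01, c2 * F2 x :=
    integral_add (h1.const_mul c1) (h2.const_mul c2)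
  rw [e1, e2, e3]
  simp only [integral_const_mul]

lemma chi_mul (s : Set ℝ) (c : ℝ → ℝ) (x : ℝ) : chi s x * c x = s.indicator c x := by
  by_cases h : x ∈ s <;> simp [chi, indicator_of_mem, indicator_of_notMem, h]

lemma key (Wn : ℕ → ℝ → ℝ → ℝ) (W : ℝ → ℝ → ℝ)
    (hWnmeas : ∀ n, Measurable (fun p : ℝ × ℝ => Wn n p.1 p.2))
    (hWnrange : ∀ n x y, Wn n x y ∈ Set.Icc (0:ℝ) 1)
    (hWmeas : Measurable (fun p : ℝ × ℝ => W p.1 p.2))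
    (hWrange : ∀ x y, W x y ∈ Set.Icc (0:ℝ) 1)
    (hcut : Tendsto (fun n => cutNorm (fun x y => Wn n x y - W x y)) atTop (nhds 0))
    (S T : ℕ → Set ℝ) (hS : ∀ n, MeasurableSet (S n)) (hT : ∀ n, MeasurableSet (T n))
    (a b : ℝ → ℝ) (hb : Measurable b)
    (hb01 : ∀ x, b x ∈ Set.Icc (0:ℝ) 1)
    (hSa : ∀ φ : ℝ → ℝ, IntegrableOn φ I01 →
      Tendsto (fun n => ∫ x in I01, chi (S n) x * φ x) atTop (nhds (∫ x in I01, a x * φ x)))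
    (hTb : ∀ φ : ℝ → ℝ, IntegrableOn φ I01 →
      Tendsto (fun n => ∫ y in I01, chi (T n) y * φ y) atTop (nhds (∫ y in I01, b y * φ y))) :
    Tendsto (fun n => ∫ x in I01, ∫ y in I01, Wn n x y * (chi (S n) x * chi (T n) y))
      atTop (nhds (∫ x in I01, ∫ y in I01, W x y * (a x * b y))) := by
  have hbd1 : ∀ n x y, ‖Wn n x y - W x y‖ ≤ 1 := fun n x y => by
    rw [Real.norm_eq_abs]; exact abs_sub_le_one (hWnrange n x y) (hWrange x y)
  have hWbd : ∀ x y, ‖W x y‖ ≤ 1 := fun x y => by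
    rw [Real.norm_eq_abs, abs_le]
    obtain ⟨h1, h2⟩ := hWrange x y; exact ⟨by linarith, h2⟩
  have hchibd : ∀ (s : Set ℝ) x, |chi s x| ≤ 1 := fun s x => by
    obtain ⟨h1, h2⟩ := chi_mem s x; rw [abs_le]; exact ⟨by linarith, h2⟩
  have hbbd : ∀ y, |b y| ≤ 1 := fun y => by
    obtain ⟨h1, h2⟩ := hb01 y; rw [abs_le]; exact ⟨by linarith, h2⟩
  -- ψ
  set ψ : ℝ → ℝ := fun x => ∫ y in I01, W x y * b y with hψ
  have hWb_meas : Measurable fun p : ℝ × ℝ => W p.1 p.2 * b p.2 :=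
    hWmeas.mul (hb.comp measurable_snd)
  have hψmeas : StronglyMeasurable ψ := measParam I01 hWb_meas
  have hψbd : ∀ x, ‖ψ x‖ ≤ 1 := fun x =>
    innerBdd (Set.Subset.refl _) zero_le_one
      (fun y => by rw [Real.norm_eq_abs]; exact abs_mul_le_one (by rw [← Real.norm_eq_abs]; exact hWbd x y) (hbbd y))
      ((hWb_meas.comp measurable_prodMk_left).aestronglyMeasurable)
  have hψint : IntegrableOn ψ I01 := intOn hψmeas.aestronglyMeasurable hψbd
  -- g
  set g : ℕ → ℝ → ℝ := fun n x => ∫ y in I01, W x y * (chi (T n) y - b y) with hgdef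
  have hgFmeas : ∀ n, Measurable fun p : ℝ × ℝ => W p.1 p.2 * (chi (T n) p.2 - b p.2) :=
    fun n => hWmeas.mul (((chi_meas (hT n)).comp measurable_snd).sub (hb.comp measurable_snd))
  have hgmeas : ∀ n, StronglyMeasurable (g n) := fun n => measParam I01 (hgFmeas n)
  have hgbd : ∀ n x, ‖g n x‖ ≤ 1 := fun n x =>
    innerBdd (Set.Subset.refl _) zero_le_one
      (fun y => by
        rw [Real.norm_eq_abs]
        exact abs_mul_le_one (by rw [← Real.norm_eq_abs]; exact hWbd x y)
          (abs_sub_le_one (chi_mem _ y) (hb01 y)))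
      (((hgFmeas n).comp measurable_prodMk_left).aestronglyMeasurable)
  have hgto : ∀ x, Tendsto (fun n => g n x) atTop (nhds 0) := by
    intro x
    have hφint : IntegrableOn (fun y => W x y) I01 :=
      intOn ((hWmeas.comp measurable_prodMk_left).aestronglyMeasurable) (fun y => hWbd x y)
    have h1 := hTb (fun y => W x y) hφint
    have e : ∀ n, g n x = (∫ y in I01, chi (T n) y * W x y) - ∫ y in I01, b y * W x y := by
      intro n
      have i1 : IntegrableOn (fun y => chi (T n) y * W x y) I01 :=
        intOn (((chi_meas (hT n)).mul (hWmeas.comp measurable_prodMk_left)).aestronglyMeasurable)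
          (fun y => by
            rw [Real.norm_eq_abs]
            exact abs_mul_le_one (hchibd _ y) (by rw [← Real.norm_eq_abs]; exact hWbd x y))
      have i2 : IntegrableOn (fun y => b y * W x y) I01 :=
        intOn ((hb.mul (hWmeas.comp measurable_prodMk_left)).aestronglyMeasurable)
          (fun y => by
            rw [Real.norm_eq_abs]
            exact abs_mul_le_one (hbbd y) (by rw [← Real.norm_eq_abs]; exact hWbd x y))
      have hpt : ∀ y, W x y * (chi (T n) y - b y) = chi (T n) y * W x y - b y * W x y :=
        fun y => by ring
      rw [hgdef]
      calc (∫ y in I01, W x y * (chi (T n) y - b y))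
          = ∫ y in I01, (chi (T n) y * W x y - b y * W x y) := by simp only [hpt]
        _ = (∫ y in I01, chi (T n) y * W x y) - ∫ y in I01, b y * W x y := integral_sub i1 i2
    simp only [e]
    simpa using h1.sub (tendsto_const_nhds (x := ∫ y in I01, b y * W x y))
  -- D
  set D : ℕ → ℝ → ℝ := fun n x => ∫ y in I01 ∩ T n, (Wn n x y - W x y) with hDdef
  have hUmeas : ∀ n, Measurable fun p : ℝ × ℝ => Wn n p.1 p.2 - W p.1 p.2 :=
    fun n => (hWnmeas n).sub hWmeas
  have hDmeas : ∀ n, StronglyMeasurable (D n) := fun n => measParam (I01 ∩ T n) (hUmeas n)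
  have hDbd : ∀ n x, ‖D n x‖ ≤ 1 := fun n x =>
    innerBdd inter_subset_left zero_le_one (fun y => hbd1 n x y)
      (((hUmeas n).comp measurable_prodMk_left).aestronglyMeasurable)
  -- decomposition
  have hdecomp : ∀ n, (∫ x in I01, ∫ y in I01, Wn n x y * (chi (S n) x * chi (T n) y))
      = (∫ x in I01 ∩ S n, D n x)
        + ((∫ x in I01, chi (S n) x * g n x) + ∫ x in I01, chi (S n) x * ψ x) := by
    intro n
    have hinner : ∀ x, (∫ y in I01, Wn n x y * (chi (S n) x * chi (T n) y))
        = chi (S n) x * D n x + (chi (S n) x * g n x + chi (S n) x * ψ x) := by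
      intro x
      have hpt : ∀ y, Wn n x y * (chi (S n) x * chi (T n) y)
          = chi (S n) x * ((T n).indicator (fun y => Wn n x y - W x y) y)
            + (chi (S n) x * (W x y * (chi (T n) y - b y)) + chi (S n) x * (W x y * b y)) := by
        intro y
        by_cases hy : y ∈ T n
        · simp only [chi, indicator_of_mem hy]; ring
        · simp only [chi, indicator_of_notMem hy]; ring
      have i1 : IntegrableOn (fun y => (T n).indicator (fun y => Wn n x y - W x y) y) I01 :=
        intOn ((Measurable.indicator ((hUmeas n).comp measurable_prodMk_left) (hT n)).aestronglyMeasurable)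
          (fun y => by
            by_cases hy : y ∈ T n
            · rw [indicator_of_mem hy]; exact hbd1 n x y
            · rw [indicator_of_notMem hy]; simp)
      have i2 : IntegrableOn (fun y => W x y * (chi (T n) y - b y)) I01 :=
        intOn (((hgFmeas n).comp measurable_prodMk_left).aestronglyMeasurable)
          (fun y => by
            rw [Real.norm_eq_abs]
            exact abs_mul_le_one (by rw [← Real.norm_eq_abs]; exact hWbd x y)
              (abs_sub_le_one (chi_mem _ y) (hb01 y)))
      have i3 : IntegrableOn (fun y => W x y * b y) I01 :=
        intOn ((hWb_meas.comp measurable_prodMk_left).aestronglyMeasurable)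
          (fun y => by
            rw [Real.norm_eq_abs]
            exact abs_mul_le_one (by rw [← Real.norm_eq_abs]; exact hWbd x y) (hbbd y))
      calc (∫ y in I01, Wn n x y * (chi (S n) x * chi (T n) y))
          = ∫ y in I01, (chi (S n) x * ((T n).indicator (fun y => Wn n x y - W x y) y)
              + (chi (S n) x * (W x y * (chi (T n) y - b y)) + chi (S n) x * (W x y * b y))) := by
            simp only [hpt]
        _ = (∫ y in I01, chi (S n) x * ((T n).indicator (fun y => Wn n x y - W x y) y))
            + ∫ y in I01, (chi (S n) x * (W x y * (chi (T n) y - b y))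
                + chi (S n) x * (W x y * b y)) :=
            integral_add (i1.const_mul _) ((i2.const_mul _).add (i3.const_mul _))
        _ = (∫ y in I01, chi (S n) x * ((T n).indicator (fun y => Wn n x y - W x y) y))
            + ((∫ y in I01, chi (S n) x * (W x y * (chi (T n) y - b y)))
                + ∫ y in I01, chi (S n) x * (W x y * b y)) := by
            rw [integral_add (i2.const_mul _) (i3.const_mul _)]
        _ = chi (S n) x * D n x + (chi (S n) x * g n x + chi (S n) x * ψ x) := by
            simp only [integral_const_mul, hDdef, hgdef, hψ]
            rw [setIntegral_indicator (hT n)]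
    have i4 : IntegrableOn (fun x => chi (S n) x * D n x) I01 :=
      intOn (((chi_meas (hS n)).mul (hDmeas n).measurable).aestronglyMeasurable)
        (fun x => by
          rw [Real.norm_eq_abs]
          exact abs_mul_le_one (hchibd _ x) (by rw [← Real.norm_eq_abs]; exact hDbd n x))
    have i5 : IntegrableOn (fun x => chi (S n) x * g n x) I01 :=
      intOn (((chi_meas (hS n)).mul (hgmeas n).measurable).aestronglyMeasurable)
        (fun x => by
          rw [Real.norm_eq_abs]
          exact abs_mul_le_one (hchibd _ x) (by rw [← Real.norm_eq_abs]; exact hgbd n x))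
    have i6 : IntegrableOn (fun x => chi (S n) x * ψ x) I01 :=
      intOn (((chi_meas (hS n)).mul hψmeas.measurable).aestronglyMeasurable)
        (fun x => by
          rw [Real.norm_eq_abs]
          exact abs_mul_le_one (hchibd _ x) (by rw [← Real.norm_eq_abs]; exact hψbd x))
    calc (∫ x in I01, ∫ y in I01, Wn n x y * (chi (S n) x * chi (T n) y))
        = ∫ x in I01, (chi (S n) x * D n x + (chi (S n) x * g n x + chi (S n) x * ψ x)) := by
          simp only [hinner]
      _ = (∫ x in I01, chi (S n) x * D n x)
          + ∫ x in I01, (chi (S n) x * g n x + chi (S n) x * ψ x) :=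
          integral_add i4 (i5.add i6)
      _ = (∫ x in I01, chi (S n) x * D n x)
          + ((∫ x in I01, chi (S n) x * g n x) + ∫ x in I01, chi (S n) x * ψ x) := by
          rw [integral_add i5 i6]
      _ = (∫ x in I01 ∩ S n, D n x)
          + ((∫ x in I01, chi (S n) x * g n x) + ∫ x in I01, chi (S n) x * ψ x) := by
          simp only [chi_mul]
          rw [setIntegral_indicator (hS n)]
  -- E1 → 0
  have hE1 : Tendsto (fun n => ∫ x in I01 ∩ S n, D n x) atTop (nhds 0) := by
    apply squeeze_zero_norm _ hcut
    intro n
    have hbdd : BddAbove (Set.range fun p : {p : Set ℝ × Set ℝ //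
        MeasurableSet p.1 ∧ MeasurableSet p.2 ∧ p.1 ⊆ I01 ∧ p.2 ⊆ I01} =>
        |∫ x in p.1.1, ∫ y in p.1.2, (fun x y => Wn n x y - W x y) x y|) := by
      refine ⟨1, ?_⟩
      rintro r ⟨p, rfl⟩
      have hin : ∀ x, ‖∫ y in p.1.2, (Wn n x y - W x y)‖ ≤ 1 := fun x =>
        innerBdd p.2.2.2.2 zero_le_one (fun y => hbd1 n x y)
          (((hUmeas n).comp measurable_prodMk_left).aestronglyMeasurable)
      have := innerBdd p.2.2.2.1 zero_le_one hin
        ((measParam p.1.2 (hUmeas n)).aestronglyMeasurable)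
      rw [Real.norm_eq_abs] at this
      exact this
    have hle := le_ciSup hbdd (⟨(I01 ∩ S n, I01 ∩ T n),
      measI01.inter (hS n), measI01.inter (hT n), inter_subset_left, inter_subset_left⟩ :
      {p : Set ℝ × Set ℝ // MeasurableSet p.1 ∧ MeasurableSet p.2 ∧ p.1 ⊆ I01 ∧ p.2 ⊆ I01})
    rw [Real.norm_eq_abs]
    exact hle
  -- B → 0
  have hB : Tendsto (fun n => ∫ x in I01, chi (S n) x * g n x) atTop (nhds 0) := by
    have habs : Tendsto (fun n => ∫ x in I01, ‖g n x‖) atTop (nhds 0) := by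
      have h0 : (∫ x in I01, (0:ℝ)) = 0 := by simp
      rw [← h0]
      apply tendsto_integral_of_dominated_convergence (fun _ => (1:ℝ))
        (fun n => (hgmeas n).norm.aestronglyMeasurable)
        (integrable_const 1)
        (fun n => ae_of_all _ (fun x => by rw [norm_norm]; exact hgbd n x))
        (ae_of_all _ (fun x => by simpa using (hgto x).norm))
    apply squeeze_zero_norm _ habs
    intro n
    have int1 : IntegrableOn (fun x => ‖chi (S n) x * g n x‖) I01 :=
      intOn (((chi_meas (hS n)).mul (hgmeas n).measurable).norm.aestronglyMeasurable)
        (fun x => by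
          rw [norm_norm, Real.norm_eq_abs]
          exact abs_mul_le_one (hchibd _ x) (by rw [← Real.norm_eq_abs]; exact hgbd n x))
    have int2 : IntegrableOn (fun x => ‖g n x‖) I01 :=
      intOn ((hgmeas n).norm.aestronglyMeasurable)
        (fun x => by rw [norm_norm]; exact hgbd n x)
    calc ‖∫ x in I01, chi (S n) x * g n x‖
        ≤ ∫ x in I01, ‖chi (S n) x * g n x‖ := norm_integral_le_integral_norm _
      _ ≤ ∫ x in I01, ‖g n x‖ := by
          apply integral_mono int1 int2
          intro x
          simp only [norm_mul]
          have h1 : ‖chi (S n) x‖ ≤ 1 := by rw [Real.norm_eq_abs]; exact hchibd _ x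
          nlinarith [norm_nonneg (g n x), norm_nonneg (chi (S n) x)]
  -- C → L
  have hC : Tendsto (fun n => ∫ x in I01, chi (S n) x * ψ x) atTop
      (nhds (∫ x in I01, a x * ψ x)) := hSa ψ hψint
  have hL : (∫ x in I01, ∫ y in I01, W x y * (a x * b y)) = ∫ x in I01, a x * ψ x := by
    have hptL : ∀ x, (∫ y in I01, W x y * (a x * b y)) = a x * ψ x := by
      intro x
      have : ∀ y, W x y * (a x * b y) = a x * (W x y * b y) := fun y => by ring
      simp only [this, integral_const_mul, hψ]
    simp only [hptL]
  simp only [hdecomp]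
  rw [hL]
  have := hE1.add (hB.add hC)
  simpa using this

lemma chiprod_meas {s t : Set ℝ} (hs : MeasurableSet s) (ht : MeasurableSet t)
    {V : ℝ → ℝ → ℝ} (hV : Measurable (fun p : ℝ × ℝ => V p.1 p.2)) :
    Measurable fun p : ℝ × ℝ => V p.1 p.2 * (chi s p.1 * chi t p.2) :=
  hV.mul (((chi_meas hs).comp measurable_fst).mul ((chi_meas ht).comp measurable_snd))

end Stmt7

open Stmt7

theorem stmt_7 (Wn : ℕ → ℝ → ℝ → ℝ) (W : ℝ → ℝ → ℝ)
    (hWnmeas : ∀ n, Measurable (fun p : ℝ × ℝ => Wn n p.1 p.2))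
    (hWnrange : ∀ n x y, Wn n x y ∈ Set.Icc (0:ℝ) 1)
    (hWnsym : ∀ n x y, Wn n x y = Wn n y x)
    (hWmeas : Measurable (fun p : ℝ × ℝ => W p.1 p.2))
    (hWrange : ∀ x y, W x y ∈ Set.Icc (0:ℝ) 1)
    (hWsym : ∀ x y, W x y = W y x)
    (hcut : Tendsto (fun n => cutNorm (fun x y => Wn n x y - W x y)) atTop (nhds 0))
    (f : ℝ → ℝ → ℝ)
    (u : ℕ → ℝ → ℝ) (humeas : ∀ n, Measurable (u n))
    (hurange : ∀ n x, u n x = -1 ∨ u n x = 1)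
    (θ : ℝ → ℝ) (hθmeas : Measurable θ) (hθrange : ∀ x, θ x ∈ Set.Icc (0:ℝ) 1)
    -- `θⁿ`, the indicator of `{uₙ = 1}`, converges weakly-* in `L^∞([0,1])` to `θ`:
    (hweak : ∀ φ : ℝ → ℝ, IntegrableOn φ I01 →
      Tendsto (fun n => ∫ x in I01, (Set.indicator {x | u n x = 1} (fun _ => (1:ℝ)) x) * φ x)
        atTop (nhds (∫ x in I01, θ x * φ x))) :
    Tendsto (fun n => ∫ x in I01, ∫ y in I01, Wn n x y * f (u n x) (u n y)) atTop
      (nhds (f 1 1 * (∫ x in I01, ∫ y in I01, W x y * (θ x * θ y))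
           + f 1 (-1) * (∫ x in I01, ∫ y in I01, W x y * (θ x * (1 - θ y)))
           + f (-1) 1 * (∫ x in I01, ∫ y in I01, W x y * ((1 - θ x) * θ y))
           + f (-1) (-1) * (∫ x in I01, ∫ y in I01, W x y * ((1 - θ x) * (1 - θ y))))) := by
  classical
  have hS1 : ∀ n, MeasurableSet {x | u n x = 1} := by
    intro n
    have : {x | u n x = 1} = u n ⁻¹' {1} := by ext x; simp
    rw [this]; exact humeas n (measurableSet_singleton 1)
  have hS2 : ∀ n, MeasurableSet {x | u n x = -1} := by
    intro n
    have : {x | u n x = -1} = u n ⁻¹' {-1} := by ext x; simp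
    rw [this]; exact humeas n (measurableSet_singleton (-1))
  have hθ1 : ∀ x, (1 - θ x) ∈ Set.Icc (0:ℝ) 1 := fun x => by
    obtain ⟨h1, h2⟩ := hθrange x; constructor <;> [linarith; linarith]
  have hθbd : ∀ x, |θ x| ≤ 1 := fun x => by
    obtain ⟨h1, h2⟩ := hθrange x; rw [abs_le]; exact ⟨by linarith, h2⟩
  have hchibd : ∀ (s : Set ℝ) x, |chi s x| ≤ 1 := fun s x => by
    obtain ⟨h1, h2⟩ := chi_mem s x; rw [abs_le]; exact ⟨by linarith, h2⟩
  -- weak-* convergence for S1 with chi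
  have hSa1 : ∀ φ : ℝ → ℝ, IntegrableOn φ I01 →
      Tendsto (fun n => ∫ x in I01, chi {x | u n x = 1} x * φ x) atTop
        (nhds (∫ x in I01, θ x * φ x)) := fun φ hφ => hweak φ hφ
  -- weak-* convergence for S2 with chi
  have hSa2 : ∀ φ : ℝ → ℝ, IntegrableOn φ I01 →
      Tendsto (fun n => ∫ x in I01, chi {x | u n x = -1} x * φ x) atTop
        (nhds (∫ x in I01, (1 - θ x) * φ x)) := by
    intro φ hφ
    have hchi12 : ∀ n x, chi {x | u n x = -1} x = 1 - chi {x | u n x = 1} x := by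
      intro n x
      rcases hurange n x with h | h <;>
        simp [chi, Set.indicator_apply, h] <;> norm_num
    have hint1 : ∀ n, IntegrableOn (fun x => chi {x | u n x = 1} x * φ x) I01 := by
      intro n
      refine Integrable.mono' hφ.norm
        ((chi_meas (hS1 n)).aestronglyMeasurable.mul hφ.1) (ae_of_all _ fun x => ?_)
      rw [norm_mul]
      have h1 : ‖chi {x | u n x = 1} x‖ ≤ 1 := by rw [Real.norm_eq_abs]; exact hchibd _ x
      nlinarith [norm_nonneg (φ x), norm_nonneg (chi {x | u n x = 1} x)]
    have e : ∀ n, (∫ x in I01, chi {x | u n x = -1} x * φ x)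
        = (∫ x in I01, φ x) - ∫ x in I01, chi {x | u n x = 1} x * φ x := by
      intro n
      have hpt : ∀ x, chi {x | u n x = -1} x * φ x
          = φ x - chi {x | u n x = 1} x * φ x := fun x => by rw [hchi12 n x]; ring
      simp only [hpt]
      exact integral_sub hφ (hint1 n)
    have e2 : (∫ x in I01, (1 - θ x) * φ x)
        = (∫ x in I01, φ x) - ∫ x in I01, θ x * φ x := by
      have hθφ : IntegrableOn (fun x => θ x * φ x) I01 := by
        refine Integrable.mono' hφ.norm
          (hθmeas.aestronglyMeasurable.mul hφ.1) (ae_of_all _ fun x => ?_)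
        rw [norm_mul]
        have h1 : ‖θ x‖ ≤ 1 := by rw [Real.norm_eq_abs]; exact hθbd x
        nlinarith [norm_nonneg (φ x), norm_nonneg (θ x)]
      have hpt : ∀ x, (1 - θ x) * φ x = φ x - θ x * φ x := fun x => by ring
      simp only [hpt]
      exact integral_sub hφ hθφ
    simp only [e]
    rw [e2]
    exact tendsto_const_nhds.sub (hweak φ hφ)
  -- four applications of key
  have h11 := key Wn W hWnmeas hWnrange hWmeas hWrange hcut
    (fun n => {x | u n x = 1}) (fun n => {x | u n x = 1}) hS1 hS1
    θ θ hθmeas hθrange hSa1 hSa1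
  have h12 := key Wn W hWnmeas hWnrange hWmeas hWrange hcut
    (fun n => {x | u n x = 1}) (fun n => {x | u n x = -1}) hS1 hS2
    θ (fun x => 1 - θ x) (measurable_const.sub hθmeas) hθ1 hSa1 hSa2
  have h21 := key Wn W hWnmeas hWnrange hWmeas hWrange hcut
    (fun n => {x | u n x = -1}) (fun n => {x | u n x = 1}) hS2 hS1
    (fun x => 1 - θ x) θ hθmeas hθrange hSa2 hSa1
  have h22 := key Wn W hWnmeas hWnrange hWmeas hWrange hcut
    (fun n => {x | u n x = -1}) (fun n => {x | u n x = -1}) hS2 hS2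
    (fun x => 1 - θ x) (fun x => 1 - θ x) (measurable_const.sub hθmeas) hθ1 hSa2 hSa2
  -- decomposition of the term
  have hWnbd : ∀ n x y, ‖Wn n x y‖ ≤ 1 := fun n x y => by
    rw [Real.norm_eq_abs, abs_le]
    obtain ⟨h1, h2⟩ := hWnrange n x y; exact ⟨by linarith, h2⟩
  have hterm : ∀ n, (∫ x in I01, ∫ y in I01, Wn n x y * f (u n x) (u n y))
      = f 1 1 * (∫ x in I01, ∫ y in I01,
            Wn n x y * (chi {x | u n x = 1} x * chi {x | u n x = 1} y))
        + f 1 (-1) * (∫ x in I01, ∫ y in I01,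
            Wn n x y * (chi {x | u n x = 1} x * chi {x | u n x = -1} y))
        + f (-1) 1 * (∫ x in I01, ∫ y in I01,
            Wn n x y * (chi {x | u n x = -1} x * chi {x | u n x = 1} y))
        + f (-1) (-1) * (∫ x in I01, ∫ y in I01,
            Wn n x y * (chi {x | u n x = -1} x * chi {x | u n x = -1} y)) := by
    intro n
    have hpt : ∀ x y, Wn n x y * f (u n x) (u n y)
        = f 1 1 * (Wn n x y * (chi {x | u n x = 1} x * chi {x | u n x = 1} y))
          + f 1 (-1) * (Wn n x y * (chi {x | u n x = 1} x * chi {x | u n x = -1} y))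
          + f (-1) 1 * (Wn n x y * (chi {x | u n x = -1} x * chi {x | u n x = 1} y))
          + f (-1) (-1) * (Wn n x y * (chi {x | u n x = -1} x * chi {x | u n x = -1} y)) := by
      intro x y
      rcases hurange n x with hx | hx <;> rcases hurange n y with hy | hy <;>
        · simp [chi, Set.indicator_apply, hx, hy]
          norm_num
          try ring
    have hinnerint : ∀ (s t : Set ℝ), MeasurableSet s → MeasurableSet t → ∀ x,
        IntegrableOn (fun y => Wn n x y * (chi s x * chi t y)) I01 := by
      intro s t hs ht x
      refine intOn (C := 1) (((chiprod_meas hs ht (hWnmeas n)).comp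
        measurable_prodMk_left).aestronglyMeasurable) (fun y => ?_)
      rw [Real.norm_eq_abs]
      exact abs_mul_le_one (by rw [← Real.norm_eq_abs]; exact hWnbd n x y)
        (abs_mul_le_one (hchibd s x) (hchibd t y))
    have houterint : ∀ (s t : Set ℝ), MeasurableSet s → MeasurableSet t →
        IntegrableOn (fun x => ∫ y in I01, Wn n x y * (chi s x * chi t y)) I01 := by
      intro s t hs ht
      refine intOn (C := 1) (measParam I01 (chiprod_meas hs ht (hWnmeas n))).aestronglyMeasurable
        (fun x => ?_)
      refine innerBdd (Set.Subset.refl _) zero_le_one (fun y => ?_)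
        (((chiprod_meas hs ht (hWnmeas n)).comp measurable_prodMk_left).aestronglyMeasurable)
      rw [Real.norm_eq_abs]
      exact abs_mul_le_one (by rw [← Real.norm_eq_abs]; exact hWnbd n x y)
        (abs_mul_le_one (hchibd s x) (hchibd t y))
    have hin : ∀ x, (∫ y in I01, Wn n x y * f (u n x) (u n y))
        = f 1 1 * (∫ y in I01, Wn n x y * (chi {x | u n x = 1} x * chi {x | u n x = 1} y))
          + f 1 (-1) * (∫ y in I01, Wn n x y * (chi {x | u n x = 1} x * chi {x | u n x = -1} y))
          + f (-1) 1 * (∫ y in I01, Wn n x y * (chi {x | u n x = -1} x * chi {x | u n x = 1} y))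
          + f (-1) (-1) * (∫ y in I01, Wn n x y * (chi {x | u n x = -1} x * chi {x | u n x = -1} y)) := by
      intro x
      calc (∫ y in I01, Wn n x y * f (u n x) (u n y))
          = ∫ y in I01,
            (f 1 1 * (Wn n x y * (chi {x | u n x = 1} x * chi {x | u n x = 1} y))
              + f 1 (-1) * (Wn n x y * (chi {x | u n x = 1} x * chi {x | u n x = -1} y))
              + f (-1) 1 * (Wn n x y * (chi {x | u n x = -1} x * chi {x | u n x = 1} y))
              + f (-1) (-1) * (Wn n x y * (chi {x | u n x = -1} x * chi {x | u n x = -1} y))) := by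
            simp only [hpt]
        _ = _ := split4 _ _ _ _ (hinnerint _ _ (hS1 n) (hS1 n) x)
            (hinnerint _ _ (hS1 n) (hS2 n) x) (hinnerint _ _ (hS2 n) (hS1 n) x)
            (hinnerint _ _ (hS2 n) (hS2 n) x)
    calc (∫ x in I01, ∫ y in I01, Wn n x y * f (u n x) (u n y))
        = ∫ x in I01,
          (f 1 1 * (∫ y in I01, Wn n x y * (chi {x | u n x = 1} x * chi {x | u n x = 1} y))
            + f 1 (-1) * (∫ y in I01, Wn n x y * (chi {x | u n x = 1} x * chi {x | u n x = -1} y))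
            + f (-1) 1 * (∫ y in I01, Wn n x y * (chi {x | u n x = -1} x * chi {x | u n x = 1} y))
            + f (-1) (-1) * (∫ y in I01, Wn n x y * (chi {x | u n x = -1} x * chi {x | u n x = -1} y))) := by
          simp only [hin]
      _ = _ := split4 _ _ _ _ (houterint _ _ (hS1 n) (hS1 n))
          (houterint _ _ (hS1 n) (hS2 n)) (houterint _ _ (hS2 n) (hS1 n))
          (houterint _ _ (hS2 n) (hS2 n))
  simp only [hterm]
  exact (((h11.const_mul (f 1 1)).add (h12.const_mul (f 1 (-1)))).add
    (h21.const_mul (f (-1) 1))).add (h22.const_mul (f (-1) (-1)))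
end

section
/- If θⁿ : [0,1] → [0,1] converge weakly-* in L^∞([0,1]) to θ, and W ∈ L¹([0,1]²) is fixed, then ∫_{[0,1]²} W(x,y) θⁿ(x) (1 − θⁿ(y)) dx dy → ∫_{[0,1]²} W(x,y) θ(x)(1 − θ(y)) dx dy, provided W is bounded (W ∈ L^∞([0,1]²)). -/
open MeasureTheory Set Filter

private lemma int_bdd {α : Type*} [MeasurableSpace α] (μ : Measure α) [IsFiniteMeasure μ]
    {f : α → ℝ} (hm : Measurable f) {C : ℝ} (hC : ∀ x, |f x| ≤ C) : Integrable f μ :=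
  ⟨hm.aestronglyMeasurable,
    HasFiniteIntegral.of_bounded (ae_of_all _ (fun x => by simpa [Real.norm_eq_abs] using hC x))⟩

theorem stmt_8 (θn : ℕ → ℝ → ℝ) (θ : ℝ → ℝ)
    (hθnmeas : ∀ n, Measurable (θn n))
    (hθnrange : ∀ n x, θn n x ∈ Set.Icc (0:ℝ) 1)
    (hθmeas : Measurable θ) (hθrange : ∀ x, θ x ∈ Set.Icc (0:ℝ) 1)
    (hweak : ∀ φ : ℝ → ℝ, IntegrableOn φ I01 →
      Tendsto (fun n => ∫ x in I01, θn n x * φ x) atTop (nhds (∫ x in I01, θ x * φ x)))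
    (W : ℝ → ℝ → ℝ)
    (hWmeas : Measurable (fun p : ℝ × ℝ => W p.1 p.2))
    (hWbdd : ∃ C : ℝ, ∀ x y, |W x y| ≤ C) :
    Tendsto (fun n => ∫ x in I01, ∫ y in I01, W x y * (θn n x * (1 - θn n y))) atTop
      (nhds (∫ x in I01, ∫ y in I01, W x y * (θ x * (1 - θ y)))) := by
  obtain ⟨C, hC⟩ := hWbdd
  have hC0 : 0 ≤ C := le_trans (abs_nonneg _) (hC 0 0)
  set μ : Measure ℝ := volume.restrict I01 with hμdef
  have hμuniv : μ Set.univ = 1 := by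
    simp [hμdef, I01, Real.volume_Icc]
  have hfin : IsFiniteMeasure μ := ⟨by simp [hμuniv]⟩
  -- abs bounds on θ's
  have habs : ∀ (u : ℝ), u ∈ Set.Icc (0:ℝ) 1 → |u| ≤ 1 := by
    intro u hu; rw [abs_le]; constructor <;> [linarith [hu.1]; exact hu.2]
  have habs1 : ∀ (u : ℝ), u ∈ Set.Icc (0:ℝ) 1 → |1 - u| ≤ 1 := by
    intro u hu; rw [abs_le]; constructor <;> [linarith [hu.2]; linarith [hu.1]]
  have hWab : ∀ (x y a b : ℝ), |a| ≤ 1 → |b| ≤ 1 → |W x y * (a * b)| ≤ C := by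
    intro x y a b ha hb
    calc |W x y * (a * b)| = |W x y| * (|a| * |b|) := by rw [abs_mul, abs_mul]
      _ ≤ C * (1 * 1) := by
          apply mul_le_mul (hC x y) _ (by positivity) hC0
          exact mul_le_mul ha hb (abs_nonneg _) zero_le_one
      _ = C := by ring
  -- measurability building blocks
  have hWm : Measurable (Function.uncurry W) := hWmeas
  have hθfst : Measurable (fun p : ℝ × ℝ => θ p.1) := hθmeas.comp measurable_fst
  have hθsnd : Measurable (fun p : ℝ × ℝ => θ p.2) := hθmeas.comp measurable_snd
  have hθnfst : ∀ n, Measurable (fun p : ℝ × ℝ => θn n p.1) :=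
    fun n => (hθnmeas n).comp measurable_fst
  have hθnsnd : ∀ n, Measurable (fun p : ℝ × ℝ => θn n p.2) :=
    fun n => (hθnmeas n).comp measurable_snd
  -- integrability of the limit integrand on the product
  have hintf : Integrable (fun p : ℝ × ℝ => W p.1 p.2 * (θ p.1 * (1 - θ p.2))) (μ.prod μ) := by
    apply int_bdd (μ.prod μ) (hWmeas.mul (hθfst.mul (measurable_const.sub hθsnd)))
    intro p; exact hWab _ _ _ _ (habs _ (hθrange p.1)) (habs1 _ (hθrange p.2))
  have hintfn : ∀ n, Integrable (fun p : ℝ × ℝ => W p.1 p.2 * (θn n p.1 * (1 - θn n p.2)))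
      (μ.prod μ) := by
    intro n
    apply int_bdd (μ.prod μ) (hWmeas.mul ((hθnfst n).mul
      (measurable_const.sub (hθnsnd n))))
    intro p; exact hWab _ _ _ _ (habs _ (hθnrange n p.1)) (habs1 _ (hθnrange n p.2))
  have hintg : ∀ n, Integrable
      (fun p : ℝ × ℝ => W p.1 p.2 * ((θn n p.1 - θ p.1) * (1 - θn n p.2))) (μ.prod μ) := by
    intro n
    apply int_bdd (μ.prod μ) (hWmeas.mul (((hθnfst n).sub hθfst).mul
      (measurable_const.sub (hθnsnd n))))
    intro p
    refine hWab _ _ _ _ ?_ (habs1 _ (hθnrange n p.2))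
    have h1 := hθnrange n p.1; have h2 := hθrange p.1
    show |θn n p.1 - θ p.1| ≤ 1
    rw [abs_le]; constructor <;> [linarith [h1.1, h2.2]; linarith [h1.2, h2.1]]
  have hinth : ∀ n, Integrable
      (fun p : ℝ × ℝ => W p.1 p.2 * (θ p.1 * (θ p.2 - θn n p.2))) (μ.prod μ) := by
    intro n
    apply int_bdd (μ.prod μ) (hWmeas.mul (hθfst.mul (hθsnd.sub
      (hθnsnd n))))
    intro p
    refine hWab _ _ _ _ (habs _ (hθrange p.1)) ?_
    have h1 := hθnrange n p.2; have h2 := hθrange p.2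
    show |θ p.2 - θn n p.2| ≤ 1
    rw [abs_le]; constructor <;> [linarith [h1.2, h2.1]; linarith [h1.1, h2.2]]
  -- the two error terms
  set T1 : ℕ → ℝ := fun n => ∫ p, W p.1 p.2 * ((θn n p.1 - θ p.1) * (1 - θn n p.2)) ∂(μ.prod μ)
    with hT1def
  set T2 : ℕ → ℝ := fun n => ∫ p, W p.1 p.2 * (θ p.1 * (θ p.2 - θn n p.2)) ∂(μ.prod μ)
    with hT2def
  -- decomposition
  have hdecomp : ∀ n, (∫ x in I01, ∫ y in I01, W x y * (θn n x * (1 - θn n y)))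
      = (∫ x in I01, ∫ y in I01, W x y * (θ x * (1 - θ y))) + T1 n + T2 n := by
    intro n
    have e1 : (∫ x in I01, ∫ y in I01, W x y * (θn n x * (1 - θn n y)))
        = ∫ p, W p.1 p.2 * (θn n p.1 * (1 - θn n p.2)) ∂(μ.prod μ) :=
      MeasureTheory.integral_integral (hintfn n)
    have e2 : (∫ x in I01, ∫ y in I01, W x y * (θ x * (1 - θ y)))
        = ∫ p, W p.1 p.2 * (θ p.1 * (1 - θ p.2)) ∂(μ.prod μ) :=
      MeasureTheory.integral_integral hintf
    have hfun : (fun p : ℝ × ℝ => W p.1 p.2 * (θn n p.1 * (1 - θn n p.2)))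
        = fun p : ℝ × ℝ => (W p.1 p.2 * (θ p.1 * (1 - θ p.2))
            + W p.1 p.2 * ((θn n p.1 - θ p.1) * (1 - θn n p.2)))
            + W p.1 p.2 * (θ p.1 * (θ p.2 - θn n p.2)) := by
      funext p; ring
    rw [e1, e2]
    show _ = (∫ p : ℝ × ℝ, W p.1 p.2 * (θ p.1 * (1 - θ p.2)) ∂(μ.prod μ))
      + (∫ p : ℝ × ℝ, W p.1 p.2 * ((θn n p.1 - θ p.1) * (1 - θn n p.2)) ∂(μ.prod μ))
      + (∫ p : ℝ × ℝ, W p.1 p.2 * (θ p.1 * (θ p.2 - θn n p.2)) ∂(μ.prod μ))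
    rw [hfun, integral_add, integral_add]
    · exact hintf
    · exact hintg n
    · exact hintf.add (hintg n)
    · exact hinth n
  -- T1 → 0
  have hT1 : Tendsto T1 atTop (nhds 0) := by
    have hswap : ∀ n, T1 n = ∫ y, (1 - θn n y) * (∫ x, W x y * (θn n x - θ x) ∂μ) ∂μ := by
      intro n
      have hu : Integrable
          (Function.uncurry fun x y => W x y * ((θn n x - θ x) * (1 - θn n y)))
          (μ.prod μ) := hintg n
      have hsw := MeasureTheory.integral_integral_swap hu
      have he : T1 n = ∫ x, ∫ y, W x y * ((θn n x - θ x) * (1 - θn n y)) ∂μ ∂μ :=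
        (MeasureTheory.integral_integral hu).symm
      rw [he, hsw]
      congr 1; funext y
      rw [show (fun x => W x y * ((θn n x - θ x) * (1 - θn n y)))
          = fun x => (1 - θn n y) * (W x y * (θn n x - θ x)) from funext fun x => by ring,
        integral_const_mul]
    simp only [funext hswap]
    have h0 : (0:ℝ) = ∫ (_ : ℝ), (0:ℝ) ∂μ := by simp
    rw [h0]
    apply tendsto_integral_of_dominated_convergence (fun _ => C)
    · intro n
      apply AEStronglyMeasurable.mul
      · exact (measurable_const.sub (hθnmeas n)).aestronglyMeasurable
      · exact (StronglyMeasurable.integral_prod_left (f := fun x y => W x y * (θn n x - θ x))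
          (hWm.mul ((hθnfst n).sub hθfst)).stronglyMeasurable
          ).aestronglyMeasurable
    · exact integrable_const C
    · intro n
      apply ae_of_all
      intro y
      rw [Real.norm_eq_abs, abs_mul]
      calc |1 - θn n y| * |∫ x, W x y * (θn n x - θ x) ∂μ|
          ≤ 1 * (C * (μ Set.univ).toReal) := by
            apply mul_le_mul (habs1 _ (hθnrange n y)) _ (abs_nonneg _) zero_le_one
            rw [← Real.norm_eq_abs]
            apply norm_integral_le_of_norm_le_const
            apply ae_of_all; intro x
            rw [Real.norm_eq_abs, abs_mul]
            calc |W x y| * |θn n x - θ x| ≤ C * 1 := by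
                  apply mul_le_mul (hC x y) _ (abs_nonneg _) hC0
                  have h1 := hθnrange n x; have h2 := hθrange x
                  rw [abs_le]; constructor <;> [linarith [h1.1, h2.2]; linarith [h1.2, h2.1]]
              _ = C := by ring
        _ = C := by rw [hμuniv]; simp
    · apply ae_of_all
      intro y
      -- pointwise: the inner integral tends to 0
      have hφ : IntegrableOn (fun x => W x y) I01 := by
        apply int_bdd μ (hWmeas.comp (measurable_id.prodMk measurable_const))
        intro x; exact hC x y
      have hw := hweak (fun x => W x y) hφ
      have hintθn : ∀ n, Integrable (fun x => θn n x * W x y) μ := by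
        intro n
        apply int_bdd μ ((hθnmeas n).mul (hWmeas.comp (measurable_id.prodMk measurable_const)))
        intro x
        show |θn n x * W x y| ≤ C
        rw [abs_mul]
        calc |θn n x| * |W x y| ≤ 1 * C :=
              mul_le_mul (habs _ (hθnrange n x)) (hC x y) (abs_nonneg _) zero_le_one
          _ = C := by ring
      have hintθ : Integrable (fun x => θ x * W x y) μ := by
        apply int_bdd μ (hθmeas.mul (hWmeas.comp (measurable_id.prodMk measurable_const)))
        intro x
        show |θ x * W x y| ≤ C
        rw [abs_mul]
        calc |θ x| * |W x y| ≤ 1 * C :=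
              mul_le_mul (habs _ (hθrange x)) (hC x y) (abs_nonneg _) zero_le_one
          _ = C := by ring
      have hFn : Tendsto (fun n => ∫ x, W x y * (θn n x - θ x) ∂μ) atTop (nhds 0) := by
        have heq : ∀ n, (∫ x, W x y * (θn n x - θ x) ∂μ)
            = (∫ x, θn n x * W x y ∂μ) - (∫ x, θ x * W x y ∂μ) := by
          intro n
          rw [← integral_sub (hintθn n) hintθ]
          congr 1; funext x; ring
        simp only [funext heq]
        have : (0:ℝ) = (∫ x, θ x * W x y ∂μ) - (∫ x, θ x * W x y ∂μ) := by ring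
        rw [this]
        exact hw.sub tendsto_const_nhds
      have : Tendsto (fun n => |∫ x, W x y * (θn n x - θ x) ∂μ|) atTop (nhds 0) := by
        have := hFn.norm
        simpa [Real.norm_eq_abs] using this
      apply squeeze_zero_norm _ this
      intro n
      rw [Real.norm_eq_abs, abs_mul]
      calc |1 - θn n y| * |∫ x, W x y * (θn n x - θ x) ∂μ|
          ≤ 1 * |∫ x, W x y * (θn n x - θ x) ∂μ| :=
            mul_le_mul_of_nonneg_right (habs1 _ (hθnrange n y)) (abs_nonneg _)
        _ = _ := by ring
  -- T2 → 0
  have hT2 : Tendsto T2 atTop (nhds 0) := by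
    set G : ℝ → ℝ := fun y => ∫ x, W x y * θ x ∂μ with hGdef
    have hGmeas : StronglyMeasurable G :=
      StronglyMeasurable.integral_prod_left (f := fun x y => W x y * θ x)
        (hWm.mul hθfst).stronglyMeasurable
    have hGbdd : ∀ y, |G y| ≤ C := by
      intro y
      rw [hGdef, ← Real.norm_eq_abs]
      have := norm_integral_le_of_norm_le_const (μ := μ)
        (f := fun x => W x y * θ x) (C := C) (ae_of_all _ (fun x => by
          rw [Real.norm_eq_abs, abs_mul]
          calc |W x y| * |θ x| ≤ C * 1 :=
                mul_le_mul (hC x y) (habs _ (hθrange x)) (abs_nonneg _) hC0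
            _ = C := by ring))
      simpa [Measure.real, hμuniv] using this
    have hGint : IntegrableOn G I01 := by
      refine ⟨hGmeas.aestronglyMeasurable, ?_⟩
      exact HasFiniteIntegral.of_bounded (ae_of_all _ (fun y => by
        simpa [Real.norm_eq_abs] using hGbdd y))
    have hswap : ∀ n, T2 n = (∫ y, θ y * G y ∂μ) - (∫ y, θn n y * G y ∂μ) := by
      intro n
      have hu : Integrable
          (Function.uncurry fun x y => W x y * (θ x * (θ y - θn n y)))
          (μ.prod μ) := hinth n
      have hs := MeasureTheory.integral_integral_swap hu
      have he : T2 n = ∫ x, ∫ y, W x y * (θ x * (θ y - θn n y)) ∂μ ∂μ :=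
        (MeasureTheory.integral_integral hu).symm
      rw [he, hs]
      have hintθG : Integrable (fun y => θ y * G y) μ := by
        apply int_bdd μ (hθmeas.mul hGmeas.measurable)
        intro y; show |θ y * G y| ≤ C; rw [abs_mul]
        calc |θ y| * |G y| ≤ 1 * C :=
              mul_le_mul (habs _ (hθrange y)) (hGbdd y) (abs_nonneg _) zero_le_one
          _ = C := by ring
      have hintθnG : Integrable (fun y => θn n y * G y) μ := by
        apply int_bdd μ ((hθnmeas n).mul hGmeas.measurable)
        intro y; show |θn n y * G y| ≤ C; rw [abs_mul]
        calc |θn n y| * |G y| ≤ 1 * C :=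
              mul_le_mul (habs _ (hθnrange n y)) (hGbdd y) (abs_nonneg _) zero_le_one
          _ = C := by ring
      rw [← integral_sub hintθG hintθnG]
      congr 1; funext y
      rw [hGdef]
      rw [show (θ y * (∫ x, W x y * θ x ∂μ) - θn n y * (∫ x, W x y * θ x ∂μ))
          = (θ y - θn n y) * ∫ x, W x y * θ x ∂μ by ring]
      rw [← integral_const_mul]
      congr 1; funext x; ring
    simp only [funext hswap]
    have hw := hweak G hGint
    have : (0:ℝ) = (∫ y, θ y * G y ∂μ) - (∫ y, θ y * G y ∂μ) := by ring
    rw [this]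
    exact tendsto_const_nhds.sub hw
  -- conclude
  have hfinal : Tendsto
      (fun n => (∫ x in I01, ∫ y in I01, W x y * (θ x * (1 - θ y))) + T1 n + T2 n)
      atTop (nhds ((∫ x in I01, ∫ y in I01, W x y * (θ x * (1 - θ y))) + 0 + 0)) :=
    (tendsto_const_nhds.add hT1).add hT2
  rw [add_zero, add_zero] at hfinal
  exact hfinal.congr (fun n => (hdecomp n).symm)
end

section
/- With the block-diagonal graphon of the previous statement and constraint ∫₀¹ θ = 1/2: there exists a measurable θ : [0,1] → {0,1} with ∫₀¹ θ = 1/2 and J(θ) = 8 Σ_k A_k(λ_k − A_k) = 0 if and only if there exists a subset K ⊆ {1,…,N} with Σ_{k∈K} λ_k = 1/2. -/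
open MeasureTheory Set Finset

theorem stmt_12 (N : ℕ) (lam : Fin N → ℝ) (hpos : ∀ k, 0 < lam k)
    (hsum : ∑ k, lam k = 1)
    (C : Fin N → Set ℝ)
    (hC : ∀ k, C k = Set.Icc (∑ h ∈ Finset.univ.filter (fun h => h < k), lam h)
                            (∑ h ∈ Finset.univ.filter (fun h => h ≤ k), lam h)) :
    (∃ θ : ℝ → ℝ, Measurable θ ∧ (∀ x, θ x = 0 ∨ θ x = 1) ∧
        (∫ x in Set.Icc (0:ℝ) 1, θ x) = 1/2 ∧
        8 * ∑ k, (∫ x in C k, θ x) * (lam k - ∫ x in C k, θ x) = 0) ↔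
      ∃ K : Finset (Fin N), ∑ k ∈ K, lam k = 1/2 := by
  classical
  set g : ℕ → ℝ := fun i => if h : i < N then lam ⟨i, h⟩ else 0 with hg
  set F : ℕ → ℝ := fun n => ∑ i ∈ Finset.range n, g i with hFdef
  have hg_nonneg : ∀ i, 0 ≤ g i := by
    intro i
    simp only [hg]
    split
    · exact (hpos _).le
    · exact le_refl 0
  have hgval : ∀ k : Fin N, g k.val = lam k := by
    intro k
    simp [hg, k.isLt]
  have hFmono : Monotone F := fun m n hmn =>
    Finset.sum_le_sum_of_subset_of_nonneg (Finset.range_subset_range.2 hmn)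
      (fun i _ _ => hg_nonneg i)
  have hF0 : F 0 = 0 := by simp [hFdef]
  have hFsucc : ∀ n, F (n + 1) = F n + g n := fun n => Finset.sum_range_succ g n
  have hFN : F N = 1 := by
    rw [← hsum, show F N = ∑ i ∈ Finset.range N, g i from rfl,
      ← Fin.sum_univ_eq_sum_range g N]
    exact Finset.sum_congr rfl (fun k _ => hgval k)
  have hlt : ∀ k : Fin N, ∑ h ∈ Finset.univ.filter (fun h => h < k), lam h = F k.val := by
    intro k
    rw [Finset.sum_filter]
    calc ∑ h : Fin N, (if h < k then lam h else 0)
        = ∑ i ∈ Finset.range N, (if i < k.val then g i else 0) := by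
          rw [← Fin.sum_univ_eq_sum_range (fun i => if i < k.val then g i else 0) N]
          refine Finset.sum_congr rfl fun h _ => ?_
          by_cases hh : h < k
          · rw [if_pos hh, if_pos (Fin.lt_def.mp hh), hgval]
          · rw [if_neg hh, if_neg (fun hc => hh (Fin.lt_def.mpr hc))]
      _ = ∑ i ∈ (Finset.range N).filter (fun i => i < k.val), g i :=
          (Finset.sum_filter _ _).symm
      _ = ∑ i ∈ Finset.range k.val, g i := by
          congr 1
          ext i
          simp only [Finset.mem_filter, Finset.mem_range]
          exact ⟨fun ⟨_, h⟩ => h, fun h => ⟨h.trans k.isLt, h⟩⟩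
      _ = F k.val := rfl
  have hle : ∀ k : Fin N, ∑ h ∈ Finset.univ.filter (fun h => h ≤ k), lam h = F (k.val + 1) := by
    intro k
    have heq : Finset.univ.filter (fun h => h ≤ k) =
        insert k (Finset.univ.filter (fun h => h < k)) := by
      ext h
      simp [le_iff_lt_or_eq, or_comm]
    rw [heq, Finset.sum_insert (by simp), hlt k, hFsucc, hgval, add_comm]
  set s : Fin N → ℝ := fun k => F k.val with hsdef
  set t : Fin N → ℝ := fun k => F (k.val + 1) with htdef
  have hC' : ∀ k, C k = Set.Icc (s k) (t k) := fun k => by rw [hC k, hlt k, hle k]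
  have hts : ∀ k, t k - s k = lam k := by
    intro k
    simp only [htdef, hsdef, hFsucc, hgval k]
    ring
  have hs0 : ∀ k, 0 ≤ s k := fun k => hF0 ▸ hFmono (Nat.zero_le _)
  have ht1 : ∀ k, t k ≤ 1 := fun k => hFN ▸ hFmono k.isLt
  have hle_st : ∀ j k : Fin N, j < k → t j ≤ s k := fun j k h => hFmono (Fin.lt_def.mp h)
  have hvolC : ∀ k, volume (C k) = ENNReal.ofReal (lam k) := fun k => by
    rw [hC' k, Real.volume_Icc, hts k]
  have hCmeas : ∀ k, MeasurableSet (C k) := fun k => hC' k ▸ measurableSet_Icc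
  -- union of the half-open blocks is (0,1]
  have hUnionAux : ∀ n : ℕ,
      (⋃ i ∈ Finset.range n, Set.Ioc (F i) (F (i + 1))) = Set.Ioc (F 0) (F n) := by
    intro n
    induction n with
    | zero => simp
    | succ n ih =>
      rw [Finset.range_add_one, Finset.set_biUnion_insert, ih, Set.union_comm,
        Set.Ioc_union_Ioc_eq_Ioc (hFmono (Nat.zero_le n)) (hFmono (Nat.le_succ n))]
  have hUnion : (⋃ k ∈ (Finset.univ : Finset (Fin N)), Set.Ioc (s k) (t k)) =
      Set.Ioc (0 : ℝ) 1 := by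
    have heq : (⋃ k ∈ (Finset.univ : Finset (Fin N)), Set.Ioc (s k) (t k)) =
        ⋃ i ∈ Finset.range N, Set.Ioc (F i) (F (i + 1)) := by
      ext x
      simp only [Set.mem_iUnion, Finset.mem_range, Finset.mem_univ, exists_prop, true_and]
      constructor
      · rintro ⟨k, hk⟩
        exact ⟨k.val, k.isLt, hk⟩
      · rintro ⟨i, hi, hx⟩
        exact ⟨⟨i, hi⟩, hx⟩
    rw [heq, hUnionAux N, hF0, hFN]
  have hdisj : (↑(Finset.univ : Finset (Fin N)) : Set (Fin N)).Pairwise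
      (Function.onFun Disjoint (fun k => Set.Ioc (s k) (t k))) := by
    have key : ∀ j k : Fin N, j < k →
        Disjoint (Set.Ioc (s j) (t j)) (Set.Ioc (s k) (t k)) := by
      intro j k h
      refine Set.disjoint_left.2 fun x hx hx' => ?_
      exact absurd (hx.2.trans (hle_st j k h)) (not_le.2 hx'.1)
    intro j _ k _ hjk
    rcases lt_or_gt_of_ne hjk with h | h
    · exact key j k h
    · exact (key k j h).symm
  have hsplit : ∀ f : ℝ → ℝ, MeasureTheory.IntegrableOn f (Set.Icc (0:ℝ) 1) →
      ∫ x in Set.Icc (0:ℝ) 1, f x = ∑ k, ∫ x in C k, f x := by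
    intro f hf
    have hIoc_sub : ∀ k : Fin N, Set.Ioc (s k) (t k) ⊆ Set.Icc (0:ℝ) 1 := fun k x hx =>
      ⟨(hs0 k).trans hx.1.le, hx.2.trans (ht1 k)⟩
    rw [MeasureTheory.integral_Icc_eq_integral_Ioc, ← hUnion,
      MeasureTheory.integral_biUnion_finset Finset.univ (fun k _ => measurableSet_Ioc) hdisj
        (fun k _ => hf.mono_set (hIoc_sub k))]
    refine Finset.sum_congr rfl fun k _ => ?_
    rw [hC' k, MeasureTheory.integral_Icc_eq_integral_Ioc]
  have hIntOn : ∀ θ : ℝ → ℝ, Measurable θ → (∀ x, θ x = 0 ∨ θ x = 1) →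
      ∀ S : Set ℝ, volume S ≠ ⊤ → MeasureTheory.IntegrableOn θ S := by
    intro θ hm hv S hS
    refine MeasureTheory.Measure.integrableOn_of_bounded hS hm.aestronglyMeasurable
      (M := 1) ?_
    filter_upwards with x
    rcases hv x with h | h <;> simp [h]
  constructor
  · -- forward direction
    rintro ⟨θ, hmeas, hval, hint, hJ⟩
    have h01 : ∀ x, 0 ≤ θ x ∧ θ x ≤ 1 := fun x => by
      rcases hval x with h | h <;> simp [h]
    have hIntC : ∀ k, MeasureTheory.IntegrableOn θ (C k) := fun k =>
      hIntOn θ hmeas hval (C k) (by rw [hvolC k]; exact ENNReal.ofReal_ne_top)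
    set A : Fin N → ℝ := fun k => ∫ x in C k, θ x with hA
    have hA0 : ∀ k, 0 ≤ A k := fun k =>
      MeasureTheory.setIntegral_nonneg (hCmeas k) (fun x _ => (h01 x).1)
    have hA1 : ∀ k, A k ≤ lam k := by
      intro k
      have h2 : ∫ x in C k, θ x ≤ ∫ x in C k, (1:ℝ) := by
        refine MeasureTheory.setIntegral_mono_on (hIntC k) ?_ (hCmeas k)
          (fun x _ => (h01 x).2)
        refine MeasureTheory.integrableOn_const (ne_of_lt ?_)
        rw [hvolC k]
        exact ENNReal.ofReal_lt_top
      have h3 : ∫ x in C k, (1:ℝ) = lam k := by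
        rw [MeasureTheory.setIntegral_const, smul_eq_mul, mul_one, measureReal_def, hvolC k,
          ENNReal.toReal_ofReal (hpos k).le]
      calc A k ≤ ∫ x in C k, (1:ℝ) := h2
        _ = lam k := h3
    have hsum0 : ∑ k, A k * (lam k - A k) = 0 := by linarith
    have hzero : ∀ k ∈ Finset.univ, A k * (lam k - A k) = 0 :=
      (Finset.sum_eq_zero_iff_of_nonneg
        (fun k _ => mul_nonneg (hA0 k) (sub_nonneg.2 (hA1 k)))).1 hsum0
    refine ⟨Finset.univ.filter (fun k => A k ≠ 0), ?_⟩
    have hsumA : ∑ k, A k = 1/2 := by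
      rw [← hsplit θ (hIntOn θ hmeas hval _
        (by rw [Real.volume_Icc]; exact ENNReal.ofReal_ne_top))]
      exact hint
    calc ∑ k ∈ Finset.univ.filter (fun k => A k ≠ 0), lam k
        = ∑ k ∈ Finset.univ.filter (fun k => A k ≠ 0), A k := by
          refine Finset.sum_congr rfl fun k hk => ?_
          have hk' := (Finset.mem_filter.1 hk).2
          rcases mul_eq_zero.1 (hzero k (Finset.mem_univ k)) with h | h
          · exact absurd h hk'
          · exact sub_eq_zero.1 h
      _ = ∑ k, A k := Finset.sum_filter_ne_zero _
      _ = 1/2 := hsumA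
  · -- backward direction
    rintro ⟨K, hK⟩
    set U : Set ℝ := ⋃ k ∈ K, C k with hU
    have hUmeas : MeasurableSet U :=
      K.measurableSet_biUnion (fun k _ => hCmeas k)
    have hAk : ∀ k, (∫ x in C k, U.indicator (fun _ => (1:ℝ)) x) =
        if k ∈ K then lam k else 0 := by
      intro k
      rw [MeasureTheory.setIntegral_indicator hUmeas, MeasureTheory.setIntegral_const,
        smul_eq_mul, mul_one]
      by_cases hk : k ∈ K
      · rw [if_pos hk]
        have hsub : C k ∩ U = C k :=
          Set.inter_eq_self_of_subset_left (Set.subset_biUnion_of_mem hk)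
        rw [hsub, measureReal_def, hvolC k, ENNReal.toReal_ofReal (hpos k).le]
      · rw [if_neg hk]
        have hnull : volume (C k ∩ U) = 0 := by
          have hsub : C k ∩ U ⊆ ⋃ j ∈ K, (C k ∩ C j) := by
            rintro x ⟨hx1, hx2⟩
            simp only [hU, Set.mem_iUnion, exists_prop] at hx2 ⊢
            obtain ⟨j, hj, hxj⟩ := hx2
            exact ⟨j, hj, hx1, hxj⟩
          refine measure_mono_null hsub ?_
          refine (measure_biUnion_null_iff K.countable_toSet).2 fun j hj => ?_
          have hne : k ≠ j := fun h => hk (h ▸ hj)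
          rw [hC' k, hC' j, Set.Icc_inter_Icc, Real.volume_Icc]
          refine ENNReal.ofReal_eq_zero.2 ?_
          rcases lt_or_gt_of_ne hne with h | h
          · have h0 := hle_st k j h
            have h1 : min (t k) (t j) ≤ t k := min_le_left _ _
            have h2 : s j ≤ max (s k) (s j) := le_max_right _ _
            linarith
          · have h0 := hle_st j k h
            have h1 : min (t k) (t j) ≤ t j := min_le_right _ _
            have h2 : s k ≤ max (s k) (s j) := le_max_left _ _
            linarith
        rw [measureReal_def, hnull]
        simp
    have hvals : ∀ x, U.indicator (fun _ => (1:ℝ)) x = 0 ∨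
        U.indicator (fun _ => (1:ℝ)) x = 1 := by
      intro x
      by_cases hx : x ∈ U <;> simp [Set.indicator_apply, hx]
    have hmeasθ : Measurable (U.indicator (fun _ => (1:ℝ))) :=
      measurable_const.indicator hUmeas
    refine ⟨U.indicator (fun _ => (1:ℝ)), hmeasθ, hvals, ?_, ?_⟩
    · rw [hsplit _ (hIntOn _ hmeasθ hvals _
        (by rw [Real.volume_Icc]; exact ENNReal.ofReal_ne_top))]
      calc ∑ k, ∫ x in C k, U.indicator (fun _ => (1:ℝ)) x
          = ∑ k, if k ∈ K then lam k else 0 :=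
            Finset.sum_congr rfl fun k _ => hAk k
        _ = ∑ k ∈ K, lam k := by
            rw [Finset.sum_ite_mem, Finset.univ_inter]
        _ = 1/2 := hK
    · have hterm : ∀ k ∈ Finset.univ,
          (∫ x in C k, U.indicator (fun _ => (1:ℝ)) x) *
            (lam k - ∫ x in C k, U.indicator (fun _ => (1:ℝ)) x) = 0 := by
        intro k _
        rw [hAk k]
        by_cases hk : k ∈ K <;> simp [hk]
      rw [Finset.sum_eq_zero hterm, mul_zero]
end

section
/- Dumbbell minimization: let 0 < λ₃ < λ₂ < λ₁ < 1/2 with λ₁+λ₂+λ₃ = 1, and define g(A₁,A₂) = A₁(λ₁−A₁) + A₂(λ₂−A₂) + (1/2−A₁−A₂)(1/2−λ₁−λ₂+A₁+A₂) on the polygon C̃ = {(A₁,A₂) : 0 ≤ A₁ ≤ λ₁, 0 ≤ A₂ ≤ λ₂, 1/2−λ₃ ≤ A₁+A₂ ≤ 1/2}. Then the minimum of g on C̃ is attained exactly at the points (λ₁, 0) and (0, λ₂). -/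
set_option maxHeartbeats 1000000 in
private lemma dumb_aux (l1 l2 l3 a b : ℝ)
    (h3 : 0 < l3) (h32 : l3 < l2) (h21 : l2 < l1) (h1 : l1 < 1/2)
    (hsum : l1 + l2 + l3 = 1)
    (ha : 0 ≤ a) (hal : a ≤ l1) (hb : 0 ≤ b) (hbl : b ≤ l2)
    (hs1 : 1/2 - l3 ≤ a + b) (hs2 : a + b ≤ 1/2) :
    (1/2-l1)*(1/2-l2) ≤ a*(l1-a)+b*(l2-b)+(1/2-a-b)*(1/2-l1-l2+a+b) ∧
    (a*(l1-a)+b*(l2-b)+(1/2-a-b)*(1/2-l1-l2+a+b) = (1/2-l1)*(1/2-l2) →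
      (a = l1 ∧ b = 0) ∨ (a = 0 ∧ b = l2)) := by
  have hs0 : 0 < a + b := by linarith
  have hw : 0 < l1 + l2 - (a+b) := by linarith
  have hf1 : 0 < 2*(a+b) - l1 := by linarith
  have hf2 : 0 < 2*(a+b) - l2 := by linarith
  have hf3 : 0 < 2*l2 + l1 - 2*(a+b) := by linarith
  have hf4 : 0 < 2*l1 + l2 - 2*(a+b) := by linarith
  have hl1p : 0 < l1 := by linarith
  have hl2p : 0 < l2 := by linarith
  rcases le_or_gt (a+b) l1 with hA | hA
  · rcases le_or_gt (a+b) l2 with hB | hB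
    · -- case i : a+b ≤ l1, a+b ≤ l2
      have ht1 : 0 ≤ b*((l2-a-b)*(2*(a+b)-l1)) :=
        mul_nonneg hb (mul_nonneg (by linarith) hf1.le)
      have ht2 : 0 ≤ a*((l1-a-b)*(2*(a+b)-l2)) :=
        mul_nonneg ha (mul_nonneg (by linarith) hf2.le)
      have ht3 : 0 ≤ a*(b*(a+b)) := mul_nonneg ha (mul_nonneg hb hs0.le)
      have hid : (a+b)*((a*(l1-a)+b*(l2-b)+(1/2-a-b)*(1/2-l1-l2+a+b)) - (1/2-l1)*(1/2-l2))
          = b*((l2-a-b)*(2*(a+b)-l1)) + a*((l1-a-b)*(2*(a+b)-l2)) + 2*(a*(b*(a+b))) := by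
        ring
      constructor
      · nlinarith [hid, ht1, ht2, ht3, hs0]
      · intro hEq
        have hT : b*((l2-a-b)*(2*(a+b)-l1)) + a*((l1-a-b)*(2*(a+b)-l2)) + 2*(a*(b*(a+b))) = 0 := by
          rw [← hid, hEq]; ring
        have h3z : a*(b*(a+b)) = 0 := le_antisymm (by linarith) ht3
        rcases mul_eq_zero.mp h3z with haz | hz
        · -- a = 0
          right
          have ht1z : b*((l2-a-b)*(2*(a+b)-l1)) = 0 := le_antisymm (by linarith) ht1
          refine ⟨haz, ?_⟩
          rcases mul_eq_zero.mp ht1z with h | h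
          · exfalso; rw [haz] at hs0; linarith
          · rcases mul_eq_zero.mp h with h | h
            · linarith
            · exfalso; linarith
        · rcases mul_eq_zero.mp hz with hbz | hz
          · -- b = 0
            left
            have ht2z : a*((l1-a-b)*(2*(a+b)-l2)) = 0 := le_antisymm (by linarith) ht2
            refine ⟨?_, hbz⟩
            rcases mul_eq_zero.mp ht2z with h | h
            · exfalso; rw [hbz] at hs0; linarith
            · rcases mul_eq_zero.mp h with h | h
              · linarith
              · exfalso; linarith
          · exfalso; linarith
    · -- case iii : a+b ≤ l1, l2 < a+b
      have ht1 : 0 ≤ b*(((a+b)-l2)*(2*l1+l2-2*(a+b))) :=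
        mul_nonneg hb (mul_nonneg (by linarith) hf4.le)
      have ht2 : 0 ≤ (l2-b)*((l1-(a+b))*(2*(a+b)-l2)) :=
        mul_nonneg (by linarith) (mul_nonneg (by linarith) hf2.le)
      have ht3 : 0 ≤ (l2-b)*(b*l2) :=
        mul_nonneg (by linarith) (mul_nonneg hb hl2p.le)
      have hid : l2*((a*(l1-a)+b*(l2-b)+(1/2-a-b)*(1/2-l1-l2+a+b)) - (1/2-l1)*(1/2-l2))
          = b*(((a+b)-l2)*(2*l1+l2-2*(a+b))) + (l2-b)*((l1-(a+b))*(2*(a+b)-l2))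
            + 2*((l2-b)*(b*l2)) := by ring
      constructor
      · nlinarith [hid, ht1, ht2, ht3, hl2p]
      · intro hEq
        have hT : b*(((a+b)-l2)*(2*l1+l2-2*(a+b))) + (l2-b)*((l1-(a+b))*(2*(a+b)-l2))
            + 2*((l2-b)*(b*l2)) = 0 := by rw [← hid, hEq]; ring
        have h3z : (l2-b)*(b*l2) = 0 := le_antisymm (by linarith) ht3
        rcases mul_eq_zero.mp h3z with hbz | hz
        · -- b = l2
          right
          have hbl2 : b = l2 := by linarith
          have ht1z : b*(((a+b)-l2)*(2*l1+l2-2*(a+b))) = 0 := le_antisymm (by linarith) ht1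
          refine ⟨?_, hbl2⟩
          rcases mul_eq_zero.mp ht1z with h | h
          · exfalso; linarith
          · rcases mul_eq_zero.mp h with h | h
            · linarith
            · exfalso; linarith
        · rcases mul_eq_zero.mp hz with hbz | hz
          · -- b = 0
            left
            have ht2z : (l2-b)*((l1-(a+b))*(2*(a+b)-l2)) = 0 := le_antisymm (by linarith) ht2
            refine ⟨?_, hbz⟩
            rcases mul_eq_zero.mp ht2z with h | h
            · exfalso; linarith
            · rcases mul_eq_zero.mp h with h | h
              · rw [hbz] at h; linarith
              · exfalso; linarith
          · exfalso; linarith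
  · rcases le_or_gt (a+b) l2 with hB | hB
    · -- case ii : l1 < a+b, a+b ≤ l2 (impossible since l2 < l1? no: l2<l1 and a+b>l1>l2 contradicts)
      exfalso; linarith
    · -- need real case ii? since l2 < l1, a+b > l1 implies a+b > l2, so only case iv remains
      -- case iv : l1 < a+b, l2 < a+b
      have ht1 : 0 ≤ (l1-a)*(((a+b)-l2)*(2*l1+l2-2*(a+b))) :=
        mul_nonneg (by linarith) (mul_nonneg (by linarith) hf4.le)
      have ht2 : 0 ≤ (l2-b)*(((a+b)-l1)*(2*l2+l1-2*(a+b))) :=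
        mul_nonneg (by linarith) (mul_nonneg (by linarith) hf3.le)
      have ht3 : 0 ≤ (l2-b)*((l1-a)*(l1+l2-(a+b))) :=
        mul_nonneg (by linarith) (mul_nonneg (by linarith) hw.le)
      have hid : (l1+l2-(a+b))*((a*(l1-a)+b*(l2-b)+(1/2-a-b)*(1/2-l1-l2+a+b)) - (1/2-l1)*(1/2-l2))
          = (l1-a)*(((a+b)-l2)*(2*l1+l2-2*(a+b))) + (l2-b)*(((a+b)-l1)*(2*l2+l1-2*(a+b)))
            + 2*((l2-b)*((l1-a)*(l1+l2-(a+b)))) := by ring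
      constructor
      · nlinarith [hid, ht1, ht2, ht3, hw]
      · intro hEq
        exfalso
        have hT : (l1-a)*(((a+b)-l2)*(2*l1+l2-2*(a+b))) + (l2-b)*(((a+b)-l1)*(2*l2+l1-2*(a+b)))
            + 2*((l2-b)*((l1-a)*(l1+l2-(a+b)))) = 0 := by rw [← hid, hEq]; ring
        have ht1z : (l1-a)*(((a+b)-l2)*(2*l1+l2-2*(a+b))) = 0 := le_antisymm (by linarith) ht1
        have ht2z : (l2-b)*(((a+b)-l1)*(2*l2+l1-2*(a+b))) = 0 := le_antisymm (by linarith) ht2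
        have hae : a = l1 := by
          rcases mul_eq_zero.mp ht1z with h | h
          · linarith
          · rcases mul_eq_zero.mp h with h | h
            · exfalso; linarith
            · exfalso; linarith
        have hbe : b = l2 := by
          rcases mul_eq_zero.mp ht2z with h | h
          · linarith
          · rcases mul_eq_zero.mp h with h | h
            · exfalso; linarith
            · exfalso; linarith
        rw [hae, hbe] at hs2; linarith

theorem stmt_13 (l1 l2 l3 : ℝ)
    (h3 : 0 < l3) (h32 : l3 < l2) (h21 : l2 < l1) (h1 : l1 < 1/2)
    (hsum : l1 + l2 + l3 = 1)
    (g : ℝ → ℝ → ℝ)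
    (hg : ∀ A1 A2, g A1 A2 =
      A1 * (l1 - A1) + A2 * (l2 - A2) +
      (1/2 - A1 - A2) * (1/2 - l1 - l2 + A1 + A2))
    (Ct : Set (ℝ × ℝ))
    (hCt : Ct = {p : ℝ × ℝ | 0 ≤ p.1 ∧ p.1 ≤ l1 ∧ 0 ≤ p.2 ∧ p.2 ≤ l2 ∧
      1/2 - l3 ≤ p.1 + p.2 ∧ p.1 + p.2 ≤ 1/2}) :
    (∀ p ∈ Ct, g l1 0 ≤ g p.1 p.2) ∧
    g 0 l2 = g l1 0 ∧ ((l1, (0:ℝ)) ∈ Ct ∧ ((0:ℝ), l2) ∈ Ct) ∧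
    (∀ p ∈ Ct, g p.1 p.2 = g l1 0 → p = (l1, (0:ℝ)) ∨ p = ((0:ℝ), l2)) := by
  have hgB : g l1 0 = (1/2-l1)*(1/2-l2) := by rw [hg]; ring
  have hgE : g 0 l2 = (1/2-l1)*(1/2-l2) := by rw [hg]; ring
  refine ⟨?_, by rw [hgB, hgE], ⟨?_, ?_⟩, ?_⟩
  · rintro ⟨a, b⟩ hp
    rw [hCt] at hp
    obtain ⟨ha, hal, hb, hbl, hs1, hs2⟩ := hp
    have := (dumb_aux l1 l2 l3 a b h3 h32 h21 h1 hsum ha hal hb hbl hs1 hs2).1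
    rw [hgB, hg]
    exact this
  · rw [hCt]
    show 0 ≤ l1 ∧ l1 ≤ l1 ∧ (0:ℝ) ≤ 0 ∧ (0:ℝ) ≤ l2 ∧ 1/2 - l3 ≤ l1 + 0 ∧ l1 + 0 ≤ 1/2
    refine ⟨by linarith, le_rfl, le_rfl, by linarith, by linarith, by linarith⟩
  · rw [hCt]
    show (0:ℝ) ≤ 0 ∧ (0:ℝ) ≤ l1 ∧ 0 ≤ l2 ∧ l2 ≤ l2 ∧ 1/2 - l3 ≤ 0 + l2 ∧ 0 + l2 ≤ 1/2
    refine ⟨le_rfl, by linarith, by linarith, le_rfl, by linarith, by linarith⟩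
  · rintro ⟨a, b⟩ hp hEq
    rw [hCt] at hp
    obtain ⟨ha, hal, hb, hbl, hs1, hs2⟩ := hp
    rw [hgB, hg] at hEq
    rcases (dumb_aux l1 l2 l3 a b h3 h32 h21 h1 hsum ha hal hb hbl hs1 hs2).2 hEq with
      ⟨h1', h2'⟩ | ⟨h1', h2'⟩
    · left; simp [Prod.ext_iff, h1', h2']
    · right; simp [Prod.ext_iff, h1', h2']
end

section
/- Half-graph Euler equation: let W(x,y) = 1 if y + 1/2 ≤ x or x + 1/2 ≤ y, 0 otherwise, on [0,1]². If θ : [0,1] → [0,1] is measurable and satisfies the stationarity condition ∫₀¹ W(x,y)(1 − 2θ(y)) dy = λ (constant) for a.e. x in some interval R ⊆ [1/2, 1], then 1 − 2θ(y) = 0 for a.e. y ∈ R − 1/2; i.e., θ = 1/2 a.e. on R − 1/2. -/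
open MeasureTheory Set

/-- The half-graph graphon. -/
noncomputable def Whalf : ℝ → ℝ → ℝ := fun x y =>
  if y + 1/2 ≤ x ∨ x + 1/2 ≤ y then 1 else 0

theorem stmt_16 (θ : ℝ → ℝ) (hθmeas : Measurable θ)
    (hθrange : ∀ x, θ x ∈ Set.Icc (0:ℝ) 1)
    (a b : ℝ) (hab : a < b) (ha : 1/2 ≤ a) (hb : b ≤ 1)
    (lam : ℝ)
    (hstat : ∀ᵐ x ∂(volume.restrict (Set.Icc a b)),
      (∫ y in Set.Icc (0:ℝ) 1, Whalf x y * (1 - 2 * θ y)) = lam) :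
    ∀ᵐ y ∂(volume.restrict (Set.Icc (a - 1/2) (b - 1/2))), θ y = 1/2 := by
  set f : ℝ → ℝ := fun y => 1 - 2 * θ y with hf
  have hfmeas : Measurable f := by fun_prop
  have hfbound : ∀ y, ‖f y‖ ≤ 1 := by
    intro y
    have h := hθrange y
    rw [Real.norm_eq_abs, abs_le]
    constructor <;> simp only [hf] <;> [linarith [h.2]; linarith [h.1]]
  have hfint : ∀ u v : ℝ, IntervalIntegrable f volume u v := by
    intro u v
    rw [intervalIntegrable_iff]
    haveI : IsFiniteMeasure (volume.restrict (Set.uIoc u v)) := by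
      constructor
      rw [Measure.restrict_apply_univ, Set.uIoc, Real.volume_Ioc]
      exact ENNReal.ofReal_lt_top
    exact (integrable_const (1:ℝ)).mono' hfmeas.aestronglyMeasurable
      (Filter.Eventually.of_forall hfbound)
  set H : ℝ → ℝ := fun t => ∫ s in (0:ℝ)..t, f s with hH
  have hHcont : Continuous H := intervalIntegral.continuous_primitive hfint 0
  -- Step A: pointwise identity for x ∈ (1/2, 1]
  have hA : ∀ x : ℝ, 1/2 < x → x ≤ 1 →
      (∫ y in Set.Icc (0:ℝ) 1, Whalf x y * f y) = H (x - 1/2) := by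
    intro x hx1 hx2
    have h1 : ∀ y ∈ Icc (0:ℝ) 1, Whalf x y * f y = Set.indicator (Icc 0 (x - 1/2)) f y := by
      intro y hy
      unfold Whalf
      by_cases hcase : y ≤ x - 1/2
      · rw [if_pos (Or.inl (by linarith)), Set.indicator_of_mem (Set.mem_Icc.mpr ⟨hy.1, hcase⟩), one_mul]
      · have h2 : ¬ (y + 1/2 ≤ x ∨ x + 1/2 ≤ y) := by
          push_neg; constructor <;> [linarith; linarith [hy.2]]
        rw [if_neg h2, Set.indicator_of_notMem (fun hmem => hcase (Set.mem_Icc.mp hmem).2), zero_mul]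
    have h3 : Icc (0:ℝ) 1 ∩ Icc 0 (x - 1/2) = Icc 0 (x - 1/2) := by
      apply inter_eq_self_of_subset_right
      exact Icc_subset_Icc le_rfl (by linarith)
    rw [setIntegral_congr_fun measurableSet_Icc h1,
      setIntegral_indicator measurableSet_Icc, h3, integral_Icc_eq_integral_Ioc,
      ← intervalIntegral.integral_of_le (show (0:ℝ) ≤ x - 1/2 by linarith)]
  -- Step A': a.e. identity
  have hne : ∀ᵐ x : ℝ, x ≠ (1/2:ℝ) := by
    rw [ae_iff]
    simpa using measure_singleton (1/2 : ℝ)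
  have hae : ∀ᵐ x ∂(volume.restrict (Set.Icc a b)), H (x - 1/2) = lam := by
    filter_upwards [hstat, ae_restrict_mem measurableSet_Icc, ae_restrict_of_ae hne]
      with x hx hmem hxne
    rw [← hA x (lt_of_le_of_ne (le_trans ha hmem.1) (Ne.symm hxne)) (le_trans hmem.2 hb)]
    exact hx
  -- Step B: H is constant lam on [a - 1/2, b - 1/2]
  have hKcont : ContinuousOn (fun x : ℝ => H (x - 1/2)) (Icc a b) :=
    (hHcont.comp (continuous_id.sub continuous_const)).continuousOn
  have hEq : EqOn (fun x : ℝ => H (x - 1/2)) (fun _ => lam) (Icc a b) :=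
    Measure.eqOn_Icc_of_ae_eq volume hab.ne hae hKcont continuousOn_const
  have hHconst : ∀ t ∈ Icc (a - 1/2) (b - 1/2), H t = lam := by
    intro t ht
    have := hEq (x := t + 1/2) ⟨by linarith [ht.1], by linarith [ht.2]⟩
    simpa using this
  -- Step C: Lebesgue differentiation
  have hloc : LocallyIntegrable f volume := by
    intro x
    refine ⟨Metric.closedBall x 1, Metric.closedBall_mem_nhds x one_pos, ?_⟩
    rw [Real.closedBall_eq_Icc]
    exact (integrable_const (1:ℝ)).mono' hfmeas.aestronglyMeasurable
      (Filter.Eventually.of_forall hfbound)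
  have hdiff := IsUnifLocDoublingMeasure.ae_tendsto_average (μ := (volume : Measure ℝ)) hloc 1
  have hne2 : ∀ᵐ y : ℝ, y ≠ a - 1/2 ∧ y ≠ b - 1/2 := by
    have h1 : ∀ᵐ y : ℝ, y ≠ a - 1/2 := by
      rw [ae_iff]; simpa using measure_singleton (a - 1/2 : ℝ)
    have h2 : ∀ᵐ y : ℝ, y ≠ b - 1/2 := by
      rw [ae_iff]; simpa using measure_singleton (b - 1/2 : ℝ)
    filter_upwards [h1, h2] with y using And.intro
  filter_upwards [ae_restrict_mem measurableSet_Icc, ae_restrict_of_ae hdiff,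
    ae_restrict_of_ae hne2] with y hmem hdy hyne
  have hy1 : a - 1/2 < y := lt_of_le_of_ne hmem.1 (Ne.symm hyne.1)
  have hy2 : y < b - 1/2 := lt_of_le_of_ne hmem.2 hyne.2
  -- apply the differentiation statement with constant center y and δ = id
  have htend : Filter.Tendsto (fun r => ⨍ z in Metric.closedBall y r, f z)
      (nhdsWithin 0 (Ioi 0)) (nhds (f y)) := by
    refine hdy (fun _ => y) id Filter.tendsto_id ?_
    filter_upwards [self_mem_nhdsWithin] with r hr
    simp only [Metric.mem_closedBall, dist_self, one_mul, id]
    exact le_of_lt hr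
  -- the average is eventually 0
  have hev : ∀ᶠ r in nhdsWithin (0:ℝ) (Ioi 0),
      (⨍ z in Metric.closedBall y r, f z) = 0 := by
    have hmem' : Ioo (0:ℝ) (min (y - (a - 1/2)) ((b - 1/2) - y)) ∈ nhdsWithin (0:ℝ) (Ioi 0) :=
      Ioo_mem_nhdsGT_of_mem ⟨le_refl _, lt_min (by linarith) (by linarith)⟩
    filter_upwards [hmem'] with r hr
    have hr0 : 0 < r := hr.1
    have hra : a - 1/2 ≤ y - r := by
      have := lt_of_lt_of_le hr.2 (min_le_left _ _); linarith
    have hrb : y + r ≤ b - 1/2 := by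
      have := lt_of_lt_of_le hr.2 (min_le_right _ _); linarith
    have hint0 : (∫ z in Metric.closedBall y r, f z) = 0 := by
      rw [Real.closedBall_eq_Icc, integral_Icc_eq_integral_Ioc,
        ← intervalIntegral.integral_of_le (by linarith : y - r ≤ y + r)]
      have := intervalIntegral.integral_interval_sub_left (hfint 0 (y + r)) (hfint 0 (y - r))
      rw [← this]
      have e1 : H (y + r) = lam := hHconst _ ⟨by linarith, hrb⟩
      have e2 : H (y - r) = lam := hHconst _ ⟨hra, by linarith⟩
      simp only [hH] at e1 e2
      rw [e1, e2, sub_self]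
    rw [setAverage_eq, hint0, smul_zero]
  have : f y = 0 :=
    tendsto_nhds_unique htend (Filter.Tendsto.congr' (hev.mono fun r hr => hr.symm)
      tendsto_const_nhds)
  simp only [hf] at this
  linarith
end

section
/- The constant function θ ≡ 1/2 satisfies the constrained stationarity condition for the half-graph: ∫₀¹ θ = 1/2 and ∫₀¹ W(x,y)(1 − 2θ(y)) dy = 0 for all x ∈ [0,1], where W is the half-graph graphon; but θ ≡ 1/2 is not a minimizer of J(θ) = 8 ∫_{1/2}^1 ∫₀^{x−1/2} [θ(x)(1−θ(y)) + θ(y)(1−θ(x))] dy dx over H = {θ : [0,1]→[0,1] measurable, ∫θ = 1/2}: the spin function θ* = 1 on [0,1/6)∪[1/2,5/6), θ* = 0 elsewhere, lies in H and satisfies J(θ*) < J(1/2). -/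
open MeasureTheory Set

/-- The half-graph cut functional. -/
noncomputable def Jhalf (θ : ℝ → ℝ) : ℝ :=
  8 * ∫ x in Set.Icc (1/2 : ℝ) 1, ∫ y in Set.Icc (0:ℝ) (x - 1/2),
      (θ x * (1 - θ y) + θ y * (1 - θ x))

/-- The candidate optimal spin function: `1` on `[0,1/6) ∪ [1/2,5/6)`, `0` elsewhere. -/
noncomputable def thetaStar : ℝ → ℝ :=
  Set.indicator (Set.Ico (0:ℝ) (1/6) ∪ Set.Ico (1/2 : ℝ) (5/6)) (fun _ => (1:ℝ))

lemma measSet : MeasurableSet (Set.Ico (0:ℝ) (1/6) ∪ Set.Ico (1/2 : ℝ) (5/6)) :=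
  measurableSet_Ico.union measurableSet_Ico

lemma intTheta (c : ℝ) (hc : 0 ≤ c) (hc2 : c ≤ 1/2) :
    ∫ y in Set.Icc (0:ℝ) c, thetaStar y = min c (1/6) := by
  rw [thetaStar, MeasureTheory.setIntegral_indicator measSet]
  rw [Set.inter_union_distrib_left]
  have h2 : Icc (0:ℝ) c ∩ Ico (1/2) (5/6) ⊆ {(1/2 : ℝ)} := by
    rintro y ⟨⟨_, hyc⟩, hy2, _⟩
    exact Set.mem_singleton_iff.mpr (le_antisymm (hyc.trans hc2) hy2)
  have hB0 : volume (Icc (0:ℝ) c ∩ Ico (1/2) (5/6)) = 0 :=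
    measure_mono_null h2 (by simp)
  have hvol : volume (Icc (0:ℝ) c ∩ Ico 0 (1/6) ∪ Icc 0 c ∩ Ico (1/2) (5/6))
      = ENNReal.ofReal (min c (1/6)) := by
    have hA : volume (Icc (0:ℝ) c ∩ Ico 0 (1/6)) = ENNReal.ofReal (min c (1/6)) := by
      apply le_antisymm
      · refine le_trans (measure_mono (?_ : _ ⊆ Icc (0:ℝ) (min c (1/6)))) ?_
        · rintro y ⟨⟨hy0, hyc⟩, _, hy6⟩
          exact ⟨hy0, le_min hyc hy6.le⟩
        · rw [Real.volume_Icc]; simp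
      · refine le_trans ?_ (measure_mono (?_ : Ico (0:ℝ) (min c (1/6)) ⊆ _))
        · rw [Real.volume_Ico]; simp
        · rintro y ⟨hy0, hym⟩
          exact ⟨⟨hy0, hym.le.trans (min_le_left _ _)⟩, hy0, lt_of_lt_of_le hym (min_le_right _ _)⟩
    refine le_antisymm (le_trans (measure_union_le _ _) (by rw [hA, hB0, add_zero])) ?_
    rw [← hA]; exact measure_mono Set.subset_union_left
  rw [MeasureTheory.setIntegral_const, measureReal_def, hvol, smul_eq_mul, mul_one,
    ENNReal.toReal_ofReal (le_min hc (by norm_num))]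

lemma thetaInt (s : Set ℝ) (hs : volume s ≠ ⊤) : IntegrableOn thetaStar s := by
  exact (integrableOn_const hs).indicator measSet

lemma intOneSub (c : ℝ) (hc : 0 ≤ c) (hc2 : c ≤ 1/2) :
    ∫ y in Set.Icc (0:ℝ) c, (1 - thetaStar y) = c - min c (1/6) := by
  have hne : volume (Icc (0:ℝ) c) ≠ ⊤ := by rw [Real.volume_Icc]; exact ENNReal.ofReal_ne_top
  rw [MeasureTheory.integral_sub (integrableOn_const (C := (1:ℝ)) hne) (thetaInt _ hne),
    intTheta c hc hc2]
  simp [Real.volume_Icc, hc]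

lemma innerStar (x : ℝ) (hx : x ∈ Set.Icc (1/2 : ℝ) 1) :
    (∫ y in Set.Icc (0:ℝ) (x - 1/2),
      (thetaStar x * (1 - thetaStar y) + thetaStar y * (1 - thetaStar x)))
      = max 0 (min (x - 2/3) (1/6)) := by
  obtain ⟨hx1, hx2⟩ := hx
  have hc : 0 ≤ x - 1/2 := by linarith
  have hc2 : x - 1/2 ≤ 1/2 := by linarith
  by_cases h : x < 5/6
  · have hθ : thetaStar x = 1 := by
      have hmem : x ∈ Ico (0:ℝ) (1/6) ∪ Ico (1/2:ℝ) (5/6) := Or.inr ⟨hx1, h⟩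
      rw [thetaStar, Set.indicator_of_mem hmem]
    simp only [hθ, one_mul, sub_self, mul_zero, add_zero]
    rw [intOneSub _ hc hc2]
    rcases le_total (x - 1/2) (1/6) with h6 | h6
    · rw [min_eq_left h6, max_eq_left (by simp [min_le_left]; left; linarith)]; ring
    · rw [min_eq_right h6, min_eq_left (by linarith), max_eq_right (by linarith)]; ring
  · have hθ : thetaStar x = 0 := by
      rw [thetaStar]; apply Set.indicator_of_notMem
      rintro (⟨_, h6⟩ | ⟨_, h5⟩) <;> [linarith; linarith]
    simp only [hθ, zero_mul, zero_add, sub_zero, mul_one]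
    rw [intTheta _ hc hc2, min_eq_right (by linarith), min_eq_right (by linarith),
      max_eq_right (by norm_num)]

lemma intLin (a b c : ℝ) : ∫ x in a..b, (x - c) = (b^2 - a^2)/2 - c*(b-a) := by
  rw [intervalIntegral.integral_sub intervalIntegral.intervalIntegrable_id
    (intervalIntegrable_const)]
  rw [integral_id, intervalIntegral.integral_const]
  simp; ring

noncomputable def G : ℝ → ℝ := fun x => max 0 (min (x - 2/3) (1/6))

lemma Gcont : Continuous G :=
  continuous_const.max ((continuous_id.sub continuous_const).min continuous_const)

lemma intG : ∫ x in Set.Icc (1/2 : ℝ) 1, G x = 1/24 := by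
  rw [MeasureTheory.integral_Icc_eq_integral_Ioc,
    ← intervalIntegral.integral_of_le (by norm_num : (1/2:ℝ) ≤ 1)]
  have hii : ∀ a b : ℝ, IntervalIntegrable G volume a b :=
    fun a b => Gcont.intervalIntegrable a b
  rw [← intervalIntegral.integral_add_adjacent_intervals (hii (1/2) (2/3)) (hii (2/3) 1),
    ← intervalIntegral.integral_add_adjacent_intervals (hii (2/3) (5/6)) (hii (5/6) 1)]
  have h1 : ∫ x in (1/2 : ℝ)..(2/3), G x = 0 := by
    rw [intervalIntegral.integral_congr (g := fun _ => (0:ℝ)) ?_]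
    · simp
    · intro x hx
      rw [Set.uIcc_of_le (by norm_num)] at hx
      obtain ⟨h1, h2⟩ := hx
      rw [G, min_eq_left (by linarith), max_eq_left (by linarith)]
  have h2 : ∫ x in (2/3 : ℝ)..(5/6), G x = 1/72 := by
    rw [intervalIntegral.integral_congr (g := fun x => x - 2/3) ?_]
    · rw [intLin]; norm_num
    · intro x hx
      rw [Set.uIcc_of_le (by norm_num)] at hx
      obtain ⟨h1, h2⟩ := hx
      rw [G, min_eq_left (by linarith), max_eq_right (by linarith)]
  have h3 : ∫ x in (5/6 : ℝ)..1, G x = 1/36 := by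
    rw [intervalIntegral.integral_congr (g := fun _ => (1/6:ℝ)) ?_]
    · simp; norm_num
    · intro x hx
      rw [Set.uIcc_of_le (by norm_num)] at hx
      obtain ⟨h1, h2⟩ := hx
      rw [G, min_eq_right (by linarith), max_eq_right (by norm_num)]
  rw [h1, h2, h3]; norm_num

lemma JhalfStar : Jhalf thetaStar = 1/3 := by
  rw [Jhalf, MeasureTheory.setIntegral_congr_fun measurableSet_Icc
    (fun x hx => innerStar x hx)]
  rw [show (fun x : ℝ => max 0 (min (x - 2/3) (1/6))) = G from rfl, intG]
  norm_num

lemma JhalfConst : Jhalf (fun _ => (1/2 : ℝ)) = 1/2 := by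
  rw [Jhalf]
  have hin : ∀ x ∈ Set.Icc (1/2 : ℝ) 1,
      (∫ _y in Set.Icc (0:ℝ) (x - 1/2),
        ((1/2 : ℝ) * (1 - 1/2) + (1/2) * (1 - 1/2))) = (x - 1/2) * (1/2) := by
    intro x hx
    rw [MeasureTheory.setIntegral_const, measureReal_def, Real.volume_Icc, smul_eq_mul,
      ENNReal.toReal_ofReal (by linarith [hx.1] : (0:ℝ) ≤ x - 1/2 - 0)]
    ring
  rw [MeasureTheory.setIntegral_congr_fun measurableSet_Icc hin,
    MeasureTheory.integral_Icc_eq_integral_Ioc,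
    ← intervalIntegral.integral_of_le (by norm_num : (1/2:ℝ) ≤ 1),
    intervalIntegral.integral_mul_const, intLin]
  norm_num

theorem stmt_17 :
    (∫ _x in Set.Icc (0:ℝ) 1, (1/2 : ℝ)) = 1/2 ∧
    (∀ x ∈ Set.Icc (0:ℝ) 1,
      (∫ y in Set.Icc (0:ℝ) 1, Whalf x y * (1 - 2 * (1/2 : ℝ))) = 0) ∧
    (Measurable thetaStar ∧ (∀ x, thetaStar x ∈ Set.Icc (0:ℝ) 1) ∧
      (∫ x in Set.Icc (0:ℝ) 1, thetaStar x) = 1/2) ∧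
    Jhalf thetaStar < Jhalf (fun _ => (1/2 : ℝ)) := by
  refine ⟨by simp [Real.volume_Icc], fun x _ => by norm_num, ⟨?_, ?_, ?_⟩, ?_⟩
  · exact measurable_const.indicator measSet
  · intro x
    rw [thetaStar, Set.indicator_apply]
    split_ifs <;> norm_num
  · rw [thetaStar, MeasureTheory.setIntegral_indicator measSet,
      Set.inter_eq_right.mpr ?_, MeasureTheory.setIntegral_const, measureReal_def,
      measure_union ?_ measurableSet_Ico]
    · rw [Real.volume_Ico, Real.volume_Ico]
      norm_num [← ENNReal.ofReal_add]
    · rw [Set.disjoint_left]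
      rintro y ⟨_, hy6⟩ ⟨hy2, _⟩
      linarith
    · rintro y (⟨hy0, hy6⟩ | ⟨hy2, hy5⟩) <;> constructor <;> linarith
  · rw [JhalfStar, JhalfConst]; norm_num
end
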